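/- arXiv:2602.03831 — 4 statements merged into one kernel-verified Lean document; each statement's English description precedes it below -/
import Mathlib

section
/- Let μ be a log-concave probability measure on ℝ with density f, and set M = ‖f‖_∞. Then Γ(μ) = 2M, where Γ(μ) = sup{μ⁺(∂I) : I ⊂ ℝ a compact interval} and for I = [a,b], μ⁺(∂I) = liminf_{ε→0⁺} (μ([a−ε,b+ε]) − μ([a,b]))/ε. -/
open MeasureTheory Metric Filter Set

noncomputable section

/-- `f` is a log-concave (nonnegative) function on `ℝ`. -/
def IsLogConcaveFn1 (f : ℝ → ℝ) : Prop :=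
  (∀ x, 0 ≤ f x) ∧
  ∀ x y τ : ℝ, 0 ≤ τ → τ ≤ 1 →
    f x ^ τ * f y ^ (1 - τ) ≤ f (τ * x + (1 - τ) * y)

/-- The `μ`-perimeter of the compact interval `[a,b]`. -/
def intervalPerim (μ : Measure ℝ) (a b : ℝ) : ℝ :=
  liminf (fun ε : ℝ => ((μ (Icc (a - ε) (b + ε))).toReal - (μ (Icc a b)).toReal) / ε)
    (nhdsWithin 0 (Ioi 0))

/-- The maximal perimeter constant `Γ(μ)` over compact intervals. -/
def Gamma1 (μ : Measure ℝ) : ℝ :=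
  sSup {x | ∃ a b : ℝ, a ≤ b ∧ x = intervalPerim μ a b}

namespace GammaAux

variable {f : ℝ → ℝ} {μ : Measure ℝ}

/-- Quasiconcavity from log-concavity (for positive levels). -/
lemma qc (hf : IsLogConcaveFn1 f) {m u v t : ℝ} (hm : 0 < m) (hu : m ≤ f u) (hv : m ≤ f v)
    (h1 : u ≤ t) (h2 : t ≤ v) : m ≤ f t := by
  rcases eq_or_lt_of_le (h1.trans h2) with h | huv
  · have ht : t = u := le_antisymm (h ▸ h2) h1
    exact ht ▸ hu
  · set τ : ℝ := (v - t) / (v - u) with hτ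
    have hvu : 0 < v - u := by linarith
    have hτ0 : 0 ≤ τ := div_nonneg (by linarith) hvu.le
    have hτ1 : τ ≤ 1 := by rw [hτ, div_le_one hvu]; linarith
    have key := hf.2 u v τ hτ0 hτ1
    have ht : τ * u + (1 - τ) * v = t := by
      rw [hτ]; field_simp
      ring
    calc m = m ^ τ * m ^ (1 - τ) := by
            rw [← Real.rpow_add hm]; norm_num
      _ ≤ f u ^ τ * f v ^ (1 - τ) :=
            mul_le_mul (Real.rpow_le_rpow hm.le hu hτ0)
              (Real.rpow_le_rpow hm.le hv (by linarith))
              (Real.rpow_nonneg hm.le _) (Real.rpow_nonneg (hf.1 u) _)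
      _ ≤ f (τ * u + (1 - τ) * v) := key
      _ = f t := by rw [ht]

/-- On the half of the segment `[p,x]` closer to `x`, `f` is at least `√(m f x)`. -/
lemma half (hf : IsLogConcaveFn1 f) {m p x : ℝ} (hm : 0 < m) (hp : m ≤ f p) (hx : m ≤ f x) :
    ∀ t ∈ uIcc ((p + x) / 2) x, m ^ (1/2 : ℝ) * f x ^ (1/2 : ℝ) ≤ f t := by
  intro t ht
  have hc : 0 < f x := hm.trans_le hx
  rcases eq_or_ne p x with rfl | hne
  · have hx2 : (p + p) / 2 = p := by ring
    rw [hx2, Set.uIcc_self, Set.mem_singleton_iff] at ht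
    subst ht
    calc m ^ (1/2 : ℝ) * f t ^ (1/2 : ℝ) ≤ f t ^ (1/2 : ℝ) * f t ^ (1/2 : ℝ) :=
          mul_le_mul_of_nonneg_right (Real.rpow_le_rpow hm.le hx (by norm_num))
            (Real.rpow_nonneg hc.le _)
      _ = f t := by rw [← Real.rpow_add hc]; norm_num
  · set τ : ℝ := (x - t) / (x - p) with hτdef
    rw [Set.mem_uIcc] at ht
    have hτ : 0 ≤ τ ∧ τ ≤ 1/2 := by
      rcases ht with ⟨h1, h2⟩ | ⟨h1, h2⟩
      · -- (p+x)/2 ≤ t ≤ x, so p < x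
        have hpx : p < x := lt_of_le_of_ne (by linarith) hne
        constructor
        · exact div_nonneg (by linarith) (by linarith)
        · rw [hτdef, div_le_iff₀ (by linarith : (0:ℝ) < x - p)]; linarith
      · -- x ≤ t ≤ (p+x)/2, so x < p
        have hpx : x < p := lt_of_le_of_ne (by linarith) (Ne.symm hne)
        constructor
        · rw [hτdef, div_nonneg_iff]
          exact Or.inr ⟨by linarith, by linarith⟩
        · rw [hτdef, div_le_iff_of_neg (by linarith : x - p < 0)]; linarith
    obtain ⟨hτ0, hτ12⟩ := hτ
    have key := hf.2 p x τ hτ0 (by linarith)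
    have hxp : x - p ≠ 0 := sub_ne_zero.mpr (Ne.symm hne)
    have ht' : τ * p + (1 - τ) * x = t := by
      rw [hτdef]; field_simp
      ring
    calc m ^ (1/2 : ℝ) * f x ^ (1/2 : ℝ)
        = (m ^ τ * m ^ (1/2 - τ : ℝ)) * f x ^ (1/2 : ℝ) := by
          rw [← Real.rpow_add hm]; norm_num
      _ ≤ (m ^ τ * f x ^ (1/2 - τ : ℝ)) * f x ^ (1/2 : ℝ) := by
          apply mul_le_mul_of_nonneg_right _ (Real.rpow_nonneg hc.le _)
          exact mul_le_mul_of_nonneg_left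
            (Real.rpow_le_rpow hm.le hx (by linarith)) (Real.rpow_nonneg hm.le _)
      _ = m ^ τ * f x ^ (1 - τ : ℝ) := by
          rw [mul_assoc, ← Real.rpow_add hc]
          congr 2
          ring
      _ ≤ f p ^ τ * f x ^ (1 - τ : ℝ) :=
          mul_le_mul_of_nonneg_right (Real.rpow_le_rpow hm.le hp hτ0)
            (Real.rpow_nonneg hc.le _)
      _ ≤ f (τ * p + (1 - τ) * x) := key
      _ = f t := by rw [ht']

lemma meas_eq (hμ : μ = volume.withDensity fun x => ENNReal.ofReal (f x))
    {s : Set ℝ} (hs : MeasurableSet s) :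
    μ s = ∫⁻ x in s, ENNReal.ofReal (f x) := by
  rw [hμ, withDensity_apply _ hs]

lemma meas_le (hμ : μ = volume.withDensity fun x => ENNReal.ofReal (f x))
    {s : Set ℝ} (hs : MeasurableSet s) {c : ℝ}
    (hc : ∀ᵐ x ∂(volume : Measure ℝ), f x ≤ c) :
    μ s ≤ ENNReal.ofReal c * volume s := by
  rw [meas_eq hμ hs]
  calc ∫⁻ x in s, ENNReal.ofReal (f x)
      ≤ ∫⁻ _x in s, ENNReal.ofReal c :=
        lintegral_mono_ae (ae_restrict_of_ae (hc.mono fun x hx => ENNReal.ofReal_le_ofReal hx))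
    _ = ENNReal.ofReal c * volume s := by rw [setLIntegral_const]

lemma meas_ge (hμ : μ = volume.withDensity fun x => ENNReal.ofReal (f x))
    {s : Set ℝ} (hs : MeasurableSet s) {c : ℝ} (hc : ∀ t ∈ s, c ≤ f t) :
    ENNReal.ofReal c * volume s ≤ μ s := by
  rw [meas_eq hμ hs]
  calc ENNReal.ofReal c * volume s = ∫⁻ _x in s, ENNReal.ofReal c := (setLIntegral_const _ _).symm
    _ ≤ ∫⁻ x in s, ENNReal.ofReal (f x) :=
        lintegral_mono_ae ((ae_restrict_mem hs).mono fun x hx =>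
          ENNReal.ofReal_le_ofReal (hc x hx))

/-- A log-concave density of a probability measure is (globally) bounded. -/
lemma bounded [IsProbabilityMeasure μ] (hf : IsLogConcaveFn1 f)
    (hμ : μ = volume.withDensity fun x => ENNReal.ofReal (f x)) :
    ∃ C : ℝ, ∀ x, f x ≤ C := by
  -- there are two distinct points where f is positive
  have h2 : ∃ u v : ℝ, u < v ∧ 0 < f u ∧ 0 < f v := by
    by_contra h
    push_neg at h
    have hsub : {x : ℝ | 0 < f x}.Subsingleton := by
      intro a ha b hb
      by_contra hab
      rcases lt_or_gt_of_ne hab with h' | h'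
      · exact absurd hb (by simpa using h a b h' ha)
      · exact absurd ha (by simpa using h b a h' hb)
    have h0 : volume {x : ℝ | 0 < f x} = 0 := hsub.measure_zero _
    have hae : (fun x => ENNReal.ofReal (f x)) =ᵐ[(volume : Measure ℝ)] 0 := by
      filter_upwards [measure_eq_zero_iff_ae_notMem.mp h0] with x hx
      simp only [Set.mem_setOf_eq, not_lt] at hx
      simp [ENNReal.ofReal_eq_zero, hx]
    have h1 : μ Set.univ = 1 := measure_univ
    rw [hμ, withDensity_apply _ MeasurableSet.univ, Measure.restrict_univ,
      lintegral_congr_ae hae] at h1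
    simp at h1
  obtain ⟨u, v, huv, hu, hv⟩ := h2
  set m : ℝ := min (f u) (f v) with hmdef
  have hm : 0 < m := lt_min hu hv
  set d : ℝ := (v - u) / 2 with hddef
  have hd : 0 < d := by rw [hddef]; linarith
  refine ⟨max m (1 / (m * (d/2)^2)), fun x => ?_⟩
  rcases le_or_gt (f x) m with h | h
  · exact h.trans (le_max_left _ _)
  · obtain ⟨p, hpm, hpd⟩ : ∃ p : ℝ, m ≤ f p ∧ d ≤ |x - p| := by
      rcases le_or_gt d |x - u| with h' | h'
      · exact ⟨u, min_le_left _ _, h'⟩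
      · refine ⟨v, min_le_right _ _, ?_⟩
        have htri : |u - v| ≤ |u - x| + |x - v| := abs_sub_le u x v
        have h1 : |u - v| = v - u := by rw [abs_sub_comm, abs_of_pos (by linarith)]
        have h2 : |u - x| = |x - u| := abs_sub_comm u x
        have : v - u = 2 * d := by rw [hddef]; ring
        linarith
    have hxm : m ≤ f x := h.le
    set B : ℝ := m ^ (1/2 : ℝ) * f x ^ (1/2 : ℝ) with hBdef
    have hB0 : 0 ≤ B :=
      mul_nonneg (Real.rpow_nonneg hm.le _) (Real.rpow_nonneg (hf.1 x) _)
    have hhalf := half hf hm hpm hxm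
    have hμs := meas_ge hμ measurableSet_uIcc hhalf
    have hvol : volume (uIcc ((p + x) / 2) x) = ENNReal.ofReal (|x - p| / 2) := by
      rw [Real.volume_interval]
      congr 1
      rw [show x - (p + x) / 2 = (x - p) / 2 by ring, abs_div]
      simp [abs_of_pos]
    have hle1 : ENNReal.ofReal (B * (|x - p| / 2)) ≤ 1 := by
      rw [ENNReal.ofReal_mul hB0]
      calc ENNReal.ofReal B * ENNReal.ofReal (|x - p| / 2)
          = ENNReal.ofReal B * volume (uIcc ((p + x) / 2) x) := by rw [hvol]
        _ ≤ μ (uIcc ((p + x) / 2) x) := hμs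
        _ ≤ 1 := prob_le_one
    have hle1' : B * (|x - p| / 2) ≤ 1 := by
      by_contra hcon
      push_neg at hcon
      have := ENNReal.one_lt_ofReal.mpr hcon
      exact absurd hle1 (not_le.mpr this)
    have hBd : B * (d / 2) ≤ 1 := by
      calc B * (d / 2) ≤ B * (|x - p| / 2) := by
            apply mul_le_mul_of_nonneg_left (by linarith) hB0
        _ ≤ 1 := hle1'
    have hBB : B * B = m * f x := by
      rw [hBdef]
      have hm2 : m ^ (1/2 : ℝ) * m ^ (1/2 : ℝ) = m := by
        rw [← Real.rpow_add hm]; norm_num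
      have hc2 : f x ^ (1/2 : ℝ) * f x ^ (1/2 : ℝ) = f x := by
        rw [← Real.rpow_add (hm.trans_le hxm)]; norm_num
      calc (m ^ (1/2:ℝ) * f x ^ (1/2:ℝ)) * (m ^ (1/2:ℝ) * f x ^ (1/2:ℝ))
          = (m ^ (1/2:ℝ) * m ^ (1/2:ℝ)) * (f x ^ (1/2:ℝ) * f x ^ (1/2:ℝ)) := by ring
        _ = m * f x := by rw [hm2, hc2]
    have hkey : (B * (d/2)) * (B * (d/2)) ≤ 1 := by
      have hBd0 : 0 ≤ B * (d / 2) := mul_nonneg hB0 (by linarith)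
      nlinarith
    have hfin : f x * (m * (d/2)^2) ≤ 1 := by
      calc f x * (m * (d/2)^2) = (B * B) * ((d/2) * (d/2)) := by rw [hBB]; ring
        _ = (B * (d/2)) * (B * (d/2)) := by ring
        _ ≤ 1 := hkey
    have hpos : 0 < m * (d/2)^2 := by positivity
    have : f x ≤ 1 / (m * (d/2)^2) := by
      rw [le_div_iff₀ hpos]
      linarith
    exact this.trans (le_max_right _ _)

lemma ev_nonneg [IsProbabilityMeasure μ] (a b : ℝ) (hab : a ≤ b) :
    ∀ᶠ ε in nhdsWithin (0:ℝ) (Ioi 0),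
      0 ≤ ((μ (Icc (a - ε) (b + ε))).toReal - (μ (Icc a b)).toReal) / ε := by
  filter_upwards [self_mem_nhdsWithin] with ε hε
  rw [Set.mem_Ioi] at hε
  apply div_nonneg _ hε.le
  rw [sub_nonneg]
  exact ENNReal.toReal_mono (measure_ne_top _ _)
    (measure_mono (Icc_subset_Icc (by linarith) (by linarith)))

lemma ev_upper [IsProbabilityMeasure μ]
    (hμ : μ = volume.withDensity fun x => ENNReal.ofReal (f x)) {c : ℝ} (hc0 : 0 ≤ c)
    (hc : ∀ᵐ x ∂(volume : Measure ℝ), f x ≤ c) (a b : ℝ) :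
    ∀ᶠ ε in nhdsWithin (0:ℝ) (Ioi 0),
      ((μ (Icc (a - ε) (b + ε))).toReal - (μ (Icc a b)).toReal) / ε ≤ 2 * c := by
  filter_upwards [self_mem_nhdsWithin] with ε hε
  rw [Set.mem_Ioi] at hε
  have hsub : Icc (a - ε) (b + ε) ⊆ (Ico (a - ε) a ∪ Icc a b) ∪ Ioc b (b + ε) := by
    intro x hx
    rw [Set.mem_Icc] at hx
    rcases lt_or_ge x a with h | h
    · exact Or.inl (Or.inl ⟨hx.1, h⟩)
    rcases le_or_gt x b with h' | h'
    · exact Or.inl (Or.inr ⟨h, h'⟩)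
    · exact Or.inr ⟨h', hx.2⟩
  have h1 : μ (Icc (a - ε) (b + ε)) ≤ μ (Ico (a - ε) a) + μ (Icc a b) + μ (Ioc b (b + ε)) :=
    (measure_mono hsub).trans ((measure_union_le _ _).trans
      (add_le_add_left (measure_union_le _ _) _))
  have h2 : μ (Ico (a - ε) a) ≤ ENNReal.ofReal c * ENNReal.ofReal ε := by
    have : μ (Ico (a - ε) a) ≤ ENNReal.ofReal c * volume (Ico (a - ε) a) :=
      meas_le hμ measurableSet_Ico hc
    rwa [Real.volume_Ico, show a - (a - ε) = ε by ring] at this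
  have h3 : μ (Ioc b (b + ε)) ≤ ENNReal.ofReal c * ENNReal.ofReal ε := by
    have : μ (Ioc b (b + ε)) ≤ ENNReal.ofReal c * volume (Ioc b (b + ε)) :=
      meas_le hμ measurableSet_Ioc hc
    rwa [Real.volume_Ioc, show b + ε - b = ε by ring] at this
  have hne : ENNReal.ofReal c * ENNReal.ofReal ε ≠ ⊤ :=
    ENNReal.mul_ne_top ENNReal.ofReal_ne_top ENNReal.ofReal_ne_top
  have h4 : (μ (Icc (a - ε) (b + ε))).toReal ≤
      (μ (Ico (a - ε) a)).toReal + (μ (Icc a b)).toReal + (μ (Ioc b (b + ε))).toReal := by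
    have hmono := ENNReal.toReal_mono
      (by exact ENNReal.add_ne_top.mpr ⟨ENNReal.add_ne_top.mpr
        ⟨measure_ne_top _ _, measure_ne_top _ _⟩, measure_ne_top _ _⟩) h1
    rwa [ENNReal.toReal_add (ENNReal.add_ne_top.mpr ⟨measure_ne_top _ _, measure_ne_top _ _⟩)
      (measure_ne_top _ _),
      ENNReal.toReal_add (measure_ne_top _ _) (measure_ne_top _ _)] at hmono
  have h5 : (μ (Ico (a - ε) a)).toReal ≤ c * ε := by
    have := ENNReal.toReal_mono hne h2
    rwa [ENNReal.toReal_mul, ENNReal.toReal_ofReal hc0, ENNReal.toReal_ofReal hε.le] at this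
  have h6 : (μ (Ioc b (b + ε))).toReal ≤ c * ε := by
    have := ENNReal.toReal_mono hne h3
    rwa [ENNReal.toReal_mul, ENNReal.toReal_ofReal hc0, ENNReal.toReal_ofReal hε.le] at this
  rw [div_le_iff₀ hε]
  linarith

lemma ev_lower [IsProbabilityMeasure μ]
    (hμ : μ = volume.withDensity fun x => ENNReal.ofReal (f x)) {x₀ r c : ℝ}
    (hr : 0 < r) (hc0 : 0 ≤ c) (h : ∀ t ∈ Icc (x₀ - r) (x₀ + r), c ≤ f t) :
    ∀ᶠ ε in nhdsWithin (0:ℝ) (Ioi 0),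
      2 * c ≤ ((μ (Icc (x₀ - ε) (x₀ + ε))).toReal - (μ (Icc x₀ x₀)).toReal) / ε := by
  filter_upwards [Ioo_mem_nhdsGT_of_mem (Set.left_mem_Ico.mpr hr)] with ε hε
  obtain ⟨hε0, hεr⟩ := hε
  have h0 : μ (Icc x₀ x₀) = 0 := by
    rw [Icc_self, hμ, withDensity_apply _ (measurableSet_singleton _),
      Measure.restrict_eq_zero.mpr (by simp), lintegral_zero_measure]
  have h1 : ENNReal.ofReal c * ENNReal.ofReal (2 * ε) ≤ μ (Icc (x₀ - ε) (x₀ + ε)) := by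
    have : ENNReal.ofReal c * volume (Icc (x₀ - ε) (x₀ + ε)) ≤ μ (Icc (x₀ - ε) (x₀ + ε)) :=
      meas_ge hμ measurableSet_Icc
        (fun t ht => h t ⟨by linarith [ht.1], by linarith [ht.2]⟩)
    rwa [Real.volume_Icc, show x₀ + ε - (x₀ - ε) = 2 * ε by ring] at this
  have h2 : c * (2 * ε) ≤ (μ (Icc (x₀ - ε) (x₀ + ε))).toReal := by
    have := ENNReal.toReal_mono (measure_ne_top μ _) h1
    rwa [ENNReal.toReal_mul, ENNReal.toReal_ofReal hc0,
      ENNReal.toReal_ofReal (by linarith)] at this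
  rw [h0, le_div_iff₀ hε0]
  simp only [ENNReal.toReal_zero]
  linarith

end GammaAux

theorem gamma_one_dim_eq_two_sup (f : ℝ → ℝ) (μ : Measure ℝ)
    [IsProbabilityMeasure μ]
    (hf : IsLogConcaveFn1 f)
    (hμ : μ = volume.withDensity (fun x => ENNReal.ofReal (f x))) :
    Gamma1 μ = 2 * essSup f volume := by
  classical
  obtain ⟨C, hC⟩ := GammaAux.bounded hf hμ
  have hC0 : 0 ≤ C := (hf.1 0).trans (hC 0)
  set M := essSup f volume with hM
  have hvol_ne : (volume : Measure ℝ) ≠ 0 := by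
    intro h
    have h01 : (volume : Measure ℝ) (Icc (0:ℝ) 1) = 0 := by rw [h]; rfl
    rw [Real.volume_Icc] at h01
    simp at h01
  haveI : (ae (volume : Measure ℝ)).NeBot := ae_neBot.mpr hvol_ne
  have hbdd : IsBoundedUnder (· ≤ ·) (ae (volume : Measure ℝ)) f :=
    ⟨C, eventually_map.mpr (Eventually.of_forall hC)⟩
  have haeM : ∀ᵐ x ∂(volume : Measure ℝ), f x ≤ M := ae_le_essSup hbdd
  have haeC : ∀ᵐ x ∂(volume : Measure ℝ), f x ≤ C := Eventually.of_forall hC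
  have hM0 : 0 < M := by
    by_contra hM0'
    push_neg at hM0'
    have hae0 : (fun x => ENNReal.ofReal (f x)) =ᵐ[(volume : Measure ℝ)] 0 := by
      filter_upwards [haeM] with x hx
      simp only [Pi.zero_apply, ENNReal.ofReal_eq_zero]
      linarith
    have h1 : μ Set.univ = 1 := measure_univ
    rw [hμ, withDensity_apply _ MeasurableSet.univ, Measure.restrict_univ,
      lintegral_congr_ae hae0] at h1
    simp at h1
  set A := {x | ∃ a b : ℝ, a ≤ b ∧ x = intervalPerim μ a b} with hA
  have hΓ : Gamma1 μ = sSup A := rfl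
  have hup : ∀ y ∈ A, y ≤ 2 * M := by
    rintro y ⟨a, b, hab, rfl⟩
    exact liminf_le_of_frequently_le ((GammaAux.ev_upper hμ hM0.le haeM a b).frequently)
      ⟨0, eventually_map.mpr (GammaAux.ev_nonneg a b hab)⟩
  have hbddA : BddAbove A := ⟨2 * M, hup⟩
  have hlow : ∀ δ : ℝ, 0 < δ → δ < M → 2 * (M - δ) ≤ Gamma1 μ := by
    intro δ hδ0 hδM
    set m : ℝ := M - δ with hmdef
    have hm0 : 0 < m := by rw [hmdef]; linarith
    have hs_not_null : volume {x : ℝ | m < f x} ≠ 0 := by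
      intro h0
      have hae' : ∀ᵐ x ∂(volume : Measure ℝ), f x ≤ m := by
        filter_upwards [measure_eq_zero_iff_ae_notMem.mp h0] with x hx
        simpa using hx
      have hle : essSup f volume ≤ m :=
        limsup_le_of_le (isCoboundedUnder_le_of_le _ fun i => hf.1 i) hae'
      rw [← hM] at hle
      linarith
    obtain ⟨u, hu, v, hv, huv⟩ :
        ∃ u ∈ {x : ℝ | m < f x}, ∃ v ∈ {x : ℝ | m < f x}, u ≠ v := by
      by_contra hcon
      push_neg at hcon
      have hss : ({x : ℝ | m < f x} : Set ℝ).Subsingleton := fun a ha b hb => hcon a ha b hb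
      exact hs_not_null (hss.measure_zero _)
    have hmain : ∀ p q : ℝ, p < q → m < f p → m < f q → 2 * (M - δ) ≤ Gamma1 μ := by
      intro p q hpq hfp hfq
      set x₀ : ℝ := (p + q) / 2 with hx₀
      set r : ℝ := (q - p) / 2 with hrdef
      have hr : 0 < r := by rw [hrdef]; linarith
      have hIcc : ∀ t ∈ Icc (x₀ - r) (x₀ + r), m ≤ f t := by
        intro t ht
        obtain ⟨ht1, ht2⟩ := ht
        have e1 : x₀ - r = p := by rw [hx₀, hrdef]; ring
        have e2 : x₀ + r = q := by rw [hx₀, hrdef]; ring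
        exact GammaAux.qc hf hm0 hfp.le hfq.le (e1 ▸ ht1) (e2 ▸ ht2)
      have hev_low := GammaAux.ev_lower hμ hr hm0.le hIcc
      have hcob : IsCoboundedUnder (· ≥ ·) (nhdsWithin (0:ℝ) (Ioi 0))
          (fun ε : ℝ => ((μ (Icc (x₀ - ε) (x₀ + ε))).toReal - (μ (Icc x₀ x₀)).toReal) / ε) :=
        isCoboundedUnder_ge_of_eventually_le _ (GammaAux.ev_upper hμ hC0 haeC x₀ x₀)
      have hperim : 2 * m ≤ intervalPerim μ x₀ x₀ := le_liminf_of_le hcob hev_low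
      have hmem : intervalPerim μ x₀ x₀ ∈ A := ⟨x₀, x₀, le_refl _, rfl⟩
      calc 2 * (M - δ) = 2 * m := by rw [hmdef]
        _ ≤ intervalPerim μ x₀ x₀ := hperim
        _ ≤ Gamma1 μ := hΓ ▸ le_csSup hbddA hmem
    rcases huv.lt_or_gt with h | h
    · exact hmain u v h hu hv
    · exact hmain v u h hv hu
  have hle : Gamma1 μ ≤ 2 * M := by
    rw [hΓ]
    exact Real.sSup_le hup (by linarith)
  have hge : 2 * M ≤ Gamma1 μ := by
    by_contra hcon
    push_neg at hcon
    set δ : ℝ := min ((2 * M - Gamma1 μ) / 4) (M / 2) with hδdef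
    have hδ0 : 0 < δ := lt_min (by linarith) (by linarith)
    have hδM : δ < M := (min_le_right _ _).trans_lt (by linarith)
    have hlow' := hlow δ hδ0 hδM
    have h2 : δ ≤ (2 * M - Gamma1 μ) / 4 := min_le_left _ _
    linarith
  linarith
end
end

section
/- Let μ be the probability measure on ℝ with density f(x) = e^{−(x+1)} 𝟙_{{x ≥ −1}} (the law of Y−1 where Y is standard exponential). Then μ is an isotropic log-concave probability measure (mean 0, variance 1), ‖f‖_∞ = 1, and Γ(μ) = 2. Hence the bound Γ(μ) ≤ 2 for one-dimensional isotropic log-concave measures is sharp. -/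
open MeasureTheory Metric Filter Set
open scoped ENNReal NNReal

noncomputable section

/-- The density of the shifted one-sided exponential distribution. -/
def shiftedExpDensity (x : ℝ) : ℝ :=
  if -1 ≤ x then Real.exp (-(x + 1)) else 0

lemma sed_nonneg (x : ℝ) : 0 ≤ shiftedExpDensity x := by
  unfold shiftedExpDensity; split <;> positivity

lemma sed_le_one (x : ℝ) : shiftedExpDensity x ≤ 1 := by
  unfold shiftedExpDensity; split
  · exact Real.exp_le_one_iff.mpr (by linarith)
  · norm_num

lemma sed_meas : Measurable shiftedExpDensity := by
  unfold shiftedExpDensity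
  exact Measurable.ite (measurableSet_le measurable_const measurable_id)
    (by fun_prop) measurable_const

lemma sed_eq (x : ℝ) :
    shiftedExpDensity x = Set.indicator (Ici 0) (fun u => Real.exp (-u)) (x + 1) := by
  unfold shiftedExpDensity
  by_cases h : -1 ≤ x
  · rw [if_pos h, Set.indicator_of_mem (by simp [mem_Ici]; linarith)]
  · rw [if_neg h, Set.indicator_of_notMem (by simp [mem_Ici]; linarith)]

lemma exp_neg_integrable : IntegrableOn (fun x => Real.exp (-x)) (Ici (0:ℝ)) := by
  rw [integrableOn_Ici_iff_integrableOn_Ioi]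
  simpa using exp_neg_integrableOn_Ioi (0:ℝ) one_pos

lemma sed_integrable : Integrable shiftedExpDensity := by
  have : Integrable (fun x : ℝ => Set.indicator (Ici 0) (fun u => Real.exp (-u)) (x + 1)) := by
    have h := (integrable_indicator_iff (measurableSet_Ici (a := (0:ℝ)))).mpr exp_neg_integrable
    exact (measurePreserving_add_right volume 1).integrable_comp h.aestronglyMeasurable |>.mpr h
  exact this.congr (by filter_upwards with x using (sed_eq x).symm)

lemma sed_integral : ∫ x, shiftedExpDensity x = 1 := by
  have h1 : ∫ x, shiftedExpDensity x
      = ∫ x : ℝ, Set.indicator (Ici 0) (fun u => Real.exp (-u)) (x + 1) :=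
    integral_congr_ae (by filter_upwards with x using sed_eq x)
  rw [h1, integral_add_right_eq_self, integral_indicator (measurableSet_Ici),
    integral_Ici_eq_integral_Ioi, integral_exp_neg_Ioi]
  simp

lemma sed_prob :
    IsProbabilityMeasure (volume.withDensity (fun x => ENNReal.ofReal (shiftedExpDensity x))) := by
  constructor
  rw [withDensity_apply _ MeasurableSet.univ, Measure.restrict_univ,
    ← ofReal_integral_eq_lintegral_ofReal sed_integrable
      (by filter_upwards with x using sed_nonneg x), sed_integral]
  simp

lemma sed_logConcave : (∀ x, 0 ≤ shiftedExpDensity x) ∧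
  ∀ x y τ : ℝ, 0 ≤ τ → τ ≤ 1 →
    shiftedExpDensity x ^ τ * shiftedExpDensity y ^ (1 - τ) ≤
      shiftedExpDensity (τ * x + (1 - τ) * y) := by
  refine ⟨sed_nonneg, fun x y τ hτ0 hτ1 => ?_⟩
  rcases eq_or_lt_of_le hτ0 with h0 | h0
  · simp [← h0, Real.rpow_one]
  rcases eq_or_lt_of_le hτ1 with h1 | h1
  · simp [h1, Real.rpow_one]
  by_cases hx : -1 ≤ x
  · by_cases hy : -1 ≤ y
    · have hxy : -1 ≤ τ * x + (1 - τ) * y := by nlinarith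
      rw [shiftedExpDensity, shiftedExpDensity, shiftedExpDensity, if_pos hx, if_pos hy,
        if_pos hxy, ← Real.exp_mul, ← Real.exp_mul, ← Real.exp_add]
      apply le_of_eq
      congr 1
      ring
    · rw [show shiftedExpDensity y = 0 by rw [shiftedExpDensity, if_neg hy],
        Real.zero_rpow (by linarith), mul_zero]
      exact sed_nonneg _
  · rw [show shiftedExpDensity x = 0 by rw [shiftedExpDensity, if_neg hx],
        Real.zero_rpow (by linarith), zero_mul]
    exact sed_nonneg _

lemma sed_essSup : essSup shiftedExpDensity volume = 1 := by
  haveI hne : (ae (volume : Measure ℝ)).NeBot := ae_neBot.mpr (by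
    intro h
    have := congrArg (fun μ : Measure ℝ => μ (Icc 0 1)) h
    simp [Real.volume_Icc] at this)
  have hbdd_below : IsBoundedUnder (· ≥ ·) (ae (volume : Measure ℝ)) shiftedExpDensity :=
    ⟨0, eventually_map.mpr (by filter_upwards with x using sed_nonneg x)⟩
  have hbdd_above : IsBoundedUnder (· ≤ ·) (ae (volume : Measure ℝ)) shiftedExpDensity :=
    ⟨1, eventually_map.mpr (by filter_upwards with x using sed_le_one x)⟩
  apply le_antisymm
  · exact limsup_le_of_le hbdd_below.isCoboundedUnder_flip
      (by filter_upwards with x using sed_le_one x)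
  · have key : ∀ δ : ℝ, 0 < δ → Real.exp (-δ) ≤ essSup shiftedExpDensity volume := by
      intro δ hδ
      refine le_limsup_of_frequently_le ?_ hbdd_above
      rw [Filter.Frequently]
      intro hev
      have hnull : volume {x : ℝ | Real.exp (-δ) ≤ shiftedExpDensity x} = 0 := by
        simpa [ae_iff] using hev
      have hsub : Icc (-1 : ℝ) (-1 + δ) ⊆ {x : ℝ | Real.exp (-δ) ≤ shiftedExpDensity x} := by
        intro x hx
        rcases hx with ⟨h1, h2⟩
        simp only [mem_setOf_eq, shiftedExpDensity, if_pos h1]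
        exact Real.exp_le_exp.mpr (by linarith)
      have := measure_mono_null hsub hnull
      rw [Real.volume_Icc] at this
      simp only [ENNReal.ofReal_eq_zero] at this
      linarith
    have ht : Tendsto (fun δ : ℝ => Real.exp (-δ)) (nhdsWithin 0 (Ioi 0)) (nhds 1) := by
      have : Tendsto (fun δ : ℝ => Real.exp (-δ)) (nhds 0) (nhds 1) := by
        simpa [Function.comp_def] using (Real.continuous_exp.comp continuous_neg).tendsto 0
      exact this.mono_left nhdsWithin_le_nhds
    exact le_of_tendsto ht (by filter_upwards [self_mem_nhdsWithin] with δ hδ using key δ hδ)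

lemma intOn_exp_mul_pow (n : ℕ) :
    IntegrableOn (fun u => Real.exp (-u) * u ^ n) (Ioi (0:ℝ)) := by
  have h := Real.GammaIntegral_convergent (s := (n:ℝ) + 1) (by positivity)
  refine (integrableOn_congr_fun (fun x hx => ?_) measurableSet_Ioi).mp h
  rw [add_sub_cancel_right, Real.rpow_natCast]

lemma int_exp_mul_pow (n : ℕ) :
    ∫ u in Ioi (0:ℝ), Real.exp (-u) * u ^ n = n.factorial := by
  have h := Real.Gamma_eq_integral (s := (n:ℝ) + 1) (by positivity)
  have h2 : Real.Gamma ((n:ℝ) + 1) = n.factorial := by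
    exact_mod_cast Real.Gamma_nat_eq_factorial n
  rw [h2] at h
  rw [h]
  apply setIntegral_congr_fun measurableSet_Ioi
  intro x _
  simp [add_sub_cancel_right, Real.rpow_natCast]

lemma sed_moment (g : ℝ → ℝ) :
    ∫ x, shiftedExpDensity x * g x = ∫ u in Ioi (0:ℝ), Real.exp (-u) * g (u - 1) := by
  have key : ∀ x : ℝ, shiftedExpDensity x * g x
      = Set.indicator (Ici 0) (fun u => Real.exp (-u) * g (u - 1)) (x + 1) := by
    intro x
    rw [sed_eq]
    by_cases h : x + 1 ∈ Ici (0:ℝ)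
    · rw [Set.indicator_of_mem h, Set.indicator_of_mem h, add_sub_cancel_right]
    · rw [Set.indicator_of_notMem h, Set.indicator_of_notMem h, zero_mul]
  rw [integral_congr_ae (by filter_upwards with x using key x),
    integral_add_right_eq_self (fun u => Set.indicator (Ici 0)
      (fun u => Real.exp (-u) * g (u - 1)) u) 1,
    integral_indicator measurableSet_Ici, integral_Ici_eq_integral_Ioi]

lemma sed_mean : ∫ x, shiftedExpDensity x * x = 0 := by
  rw [sed_moment (fun x => x)]
  have h1 := intOn_exp_mul_pow 1
  have h0 := intOn_exp_mul_pow 0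
  have : ∫ u in Ioi (0:ℝ), Real.exp (-u) * (u - 1)
      = (∫ u in Ioi (0:ℝ), Real.exp (-u) * u ^ 1) - ∫ u in Ioi (0:ℝ), Real.exp (-u) * u ^ 0 := by
    rw [← integral_sub h1 h0]
    congr 1; ext u; ring
  rw [this, int_exp_mul_pow, int_exp_mul_pow]
  norm_num

lemma sed_second : ∫ x, shiftedExpDensity x * x ^ 2 = 1 := by
  rw [sed_moment (fun x => x ^ 2)]
  have h2 := intOn_exp_mul_pow 2
  have h1 := intOn_exp_mul_pow 1
  have h0 := intOn_exp_mul_pow 0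
  have e : ∀ u : ℝ, Real.exp (-u) * (u - 1) ^ 2
      = (Real.exp (-u) * u ^ 2 - 2 * (Real.exp (-u) * u ^ 1)) + Real.exp (-u) * u ^ 0 := by
    intro u; ring
  calc ∫ u in Ioi (0:ℝ), Real.exp (-u) * (u - 1) ^ 2
      = ∫ u in Ioi (0:ℝ), ((Real.exp (-u) * u ^ 2 - 2 * (Real.exp (-u) * u ^ 1))
          + Real.exp (-u) * u ^ 0) := by
        exact integral_congr_ae (by filter_upwards with u using e u)
    _ = ((∫ u in Ioi (0:ℝ), Real.exp (-u) * u ^ 2)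
          - 2 * ∫ u in Ioi (0:ℝ), Real.exp (-u) * u ^ 1)
          + ∫ u in Ioi (0:ℝ), Real.exp (-u) * u ^ 0 := by
        have hsub : IntegrableOn
            (fun u => Real.exp (-u) * u ^ 2 - 2 * (Real.exp (-u) * u ^ 1)) (Ioi 0) volume :=
          h2.sub (h1.const_mul 2)
        rw [integral_add hsub h0, integral_sub h2 (h1.const_mul 2), MeasureTheory.integral_const_mul]
    _ = 1 := by rw [int_exp_mul_pow, int_exp_mul_pow, int_exp_mul_pow]; norm_num

lemma sed_moment_withDensity (g : ℝ → ℝ) :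
    ∫ x, g x ∂(volume.withDensity fun x => ENNReal.ofReal (shiftedExpDensity x))
      = ∫ x, shiftedExpDensity x * g x := by
  have hm : Measurable (fun x => Real.toNNReal (shiftedExpDensity x)) := sed_meas.real_toNNReal
  rw [show (fun x => ENNReal.ofReal (shiftedExpDensity x))
      = fun x => ((Real.toNNReal (shiftedExpDensity x) : ℝ≥0) : ℝ≥0∞) from rfl,
    integral_withDensity_eq_integral_smul hm g]
  apply integral_congr_ae
  filter_upwards with x
  rw [NNReal.smul_def, Real.coe_toNNReal _ (sed_nonneg x), smul_eq_mul]

lemma int_exp_interval (a b : ℝ) :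
    ∫ x in a..b, Real.exp (-(x+1)) = Real.exp (-(a+1)) - Real.exp (-(b+1)) := by
  have h : ∀ x : ℝ, HasDerivAt (fun y => -Real.exp (-(y+1))) (Real.exp (-(x+1))) x := by
    intro x
    have h1 : HasDerivAt (fun y : ℝ => -(y+1)) (-1) x := by
      exact ((hasDerivAt_id x).add_const 1).neg
    have := (Real.hasDerivAt_exp (-(x+1))).comp x h1
    simpa [Function.comp_def, Pi.neg_def] using this.neg
  rw [intervalIntegral.integral_eq_sub_of_hasDerivAt (fun x _ => h x)
    ((Real.continuous_exp.comp (by continuity)).intervalIntegrable a b)]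
  ring

lemma measure_Icc_eq (a b : ℝ) (ha : -1 ≤ a) (hab : a ≤ b) :
    (volume.withDensity fun x => ENNReal.ofReal (shiftedExpDensity x)) (Icc a b)
      = ENNReal.ofReal (Real.exp (-(a+1)) - Real.exp (-(b+1))) := by
  rw [withDensity_apply _ measurableSet_Icc,
    ← ofReal_integral_eq_lintegral_ofReal (sed_integrable.integrableOn)
      (by filter_upwards with x using sed_nonneg x)]
  congr 1
  have : ∫ x in Icc a b, shiftedExpDensity x = ∫ x in Icc a b, Real.exp (-(x+1)) := by
    apply setIntegral_congr_fun measurableSet_Icc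
    intro x hx
    rw [shiftedExpDensity, if_pos (by linarith [hx.1])]
  rw [this, integral_Icc_eq_integral_Ioc, ← intervalIntegral.integral_of_le hab,
    int_exp_interval]

lemma sed_measure_le_volume (s : Set ℝ) (hs : MeasurableSet s) :
    (volume.withDensity fun x => ENNReal.ofReal (shiftedExpDensity x)) s ≤ volume s := by
  rw [withDensity_apply _ hs]
  calc ∫⁻ x in s, ENNReal.ofReal (shiftedExpDensity x) ∂volume
      ≤ ∫⁻ _ in s, 1 ∂volume := by
        apply lintegral_mono
        intro x
        exact ENNReal.ofReal_le_one.mpr (sed_le_one x)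
    _ = volume s := by simp

lemma sed_perim_le_two (a b : ℝ) (hab : a ≤ b) :
    intervalPerim (volume.withDensity fun x => ENNReal.ofReal (shiftedExpDensity x)) a b ≤ 2 := by
  set ν := volume.withDensity fun x => ENNReal.ofReal (shiftedExpDensity x) with hν
  haveI : IsProbabilityMeasure ν := sed_prob
  set u : ℝ → ℝ := fun ε => ((ν (Icc (a - ε) (b + ε))).toReal - (ν (Icc a b)).toReal) / ε with hu
  have hub : ∀ᶠ ε in nhdsWithin (0:ℝ) (Ioi 0), u ε ≤ 2 := by
    filter_upwards [self_mem_nhdsWithin] with ε (hε : 0 < ε)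
    have hsub : Icc (a - ε) (b + ε) ⊆ Icc (a - ε) a ∪ Icc a b ∪ Icc b (b + ε) := by
      intro x hx
      rcases le_or_gt x a with h | h
      · exact Or.inl (Or.inl ⟨hx.1, h⟩)
      rcases le_or_gt x b with h' | h'
      · exact Or.inl (Or.inr ⟨h.le, h'⟩)
      · exact Or.inr ⟨h'.le, hx.2⟩
    have hle : ν (Icc (a - ε) (b + ε))
        ≤ ν (Icc (a - ε) a) + ν (Icc a b) + ν (Icc b (b + ε)) := by
      refine (measure_mono hsub).trans ?_
      refine (measure_union_le _ _).trans ?_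
      gcongr
      exact measure_union_le _ _
    have h1 : (ν (Icc (a - ε) a)).toReal ≤ ε := by
      have := (sed_measure_le_volume _ measurableSet_Icc).trans_eq (Real.volume_Icc (a := a - ε) (b := a))
      calc (ν (Icc (a - ε) a)).toReal ≤ (ENNReal.ofReal (a - (a - ε))).toReal :=
            ENNReal.toReal_mono ENNReal.ofReal_ne_top this
        _ = ε := by rw [ENNReal.toReal_ofReal (by linarith)]; ring
    have h3 : (ν (Icc b (b + ε))).toReal ≤ ε := by
      have := (sed_measure_le_volume _ measurableSet_Icc).trans_eq (Real.volume_Icc (a := b) (b := b + ε))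
      calc (ν (Icc b (b + ε))).toReal ≤ (ENNReal.ofReal (b + ε - b)).toReal :=
            ENNReal.toReal_mono ENNReal.ofReal_ne_top this
        _ = ε := by rw [ENNReal.toReal_ofReal (by linarith)]; ring
    have hto : (ν (Icc (a - ε) (b + ε))).toReal
        ≤ (ν (Icc (a - ε) a)).toReal + (ν (Icc a b)).toReal + (ν (Icc b (b + ε))).toReal := by
      calc (ν (Icc (a - ε) (b + ε))).toReal
          ≤ (ν (Icc (a - ε) a) + ν (Icc a b) + ν (Icc b (b + ε))).toReal :=
            ENNReal.toReal_mono (by finiteness) hle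
        _ = _ := by rw [ENNReal.toReal_add (by finiteness) (by finiteness),
            ENNReal.toReal_add (by finiteness) (by finiteness)]
    rw [hu]
    rw [div_le_iff₀ hε]
    nlinarith
  have hlb : ∀ᶠ ε in nhdsWithin (0:ℝ) (Ioi 0), 0 ≤ u ε := by
    filter_upwards [self_mem_nhdsWithin] with ε (hε : 0 < ε)
    apply div_nonneg _ hε.le
    have hmono : ν (Icc a b) ≤ ν (Icc (a - ε) (b + ε)) :=
      measure_mono (Icc_subset_Icc (by linarith) (by linarith))
    have := ENNReal.toReal_mono (by finiteness) hmono
    linarith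
  exact liminf_le_of_frequently_le hub.frequently ⟨0, eventually_map.mpr hlb⟩

lemma sed_perim_eq (c : ℝ) (hc : -1 < c) :
    intervalPerim (volume.withDensity fun x => ENNReal.ofReal (shiftedExpDensity x)) c c
      = 2 * Real.exp (-(c + 1)) := by
  set ν := volume.withDensity fun x => ENNReal.ofReal (shiftedExpDensity x) with hν
  set u : ℝ → ℝ := fun ε => ((ν (Icc (c - ε) (c + ε))).toReal - (ν (Icc c c)).toReal) / ε with hu
  set g : ℝ → ℝ := fun ε => Real.exp (-(c + 1) + ε) - Real.exp (-(c + 1) - ε) with hg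
  have hg0 : g 0 = 0 := by simp [hg]
  have hd : HasDerivAt g (2 * Real.exp (-(c + 1))) 0 := by
    have d1 : HasDerivAt (fun ε : ℝ => Real.exp (-(c + 1) + ε)) (Real.exp (-(c + 1) + 0)) 0 := by
      have h1 : HasDerivAt (fun ε : ℝ => -(c + 1) + ε) 1 0 := by
        simpa using (hasDerivAt_id (0:ℝ)).const_add (-(c + 1))
      simpa [Function.comp_def] using (Real.hasDerivAt_exp (-(c + 1) + 0)).comp 0 h1
    have d2 : HasDerivAt (fun ε : ℝ => Real.exp (-(c + 1) - ε)) (-Real.exp (-(c + 1) - 0)) 0 := by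
      have h2 : HasDerivAt (fun ε : ℝ => -(c + 1) - ε) (-1) 0 := by
        exact (hasDerivAt_id (0:ℝ)).const_sub (-(c + 1))
      simpa [Function.comp_def] using (Real.hasDerivAt_exp (-(c + 1) - 0)).comp 0 h2
    have := d1.sub d2
    rw [hg]
    refine this.congr_deriv ?_
    ring
  have hslope : Tendsto (fun ε => g ε / ε) (nhdsWithin 0 (Ioi 0))
      (nhds (2 * Real.exp (-(c + 1)))) := by
    have := hasDerivAt_iff_tendsto_slope.mp hd
    have h2 : Tendsto (slope g 0) (nhdsWithin 0 (Ioi 0)) (nhds (2 * Real.exp (-(c + 1)))) :=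
      this.mono_left (nhdsWithin_mono 0 (fun x hx => ne_of_gt hx))
    refine h2.congr' ?_
    filter_upwards [self_mem_nhdsWithin] with ε (hε : 0 < ε)
    rw [slope_def_field, hg0]
    simp only [sub_zero]
  have hcc : (ν (Icc c c)).toReal = 0 := by
    rw [measure_Icc_eq c c hc.le le_rfl]
    simp
  have heq : ∀ᶠ ε in nhdsWithin (0:ℝ) (Ioi 0), g ε / ε = u ε := by
    have hev : ∀ᶠ ε in nhds (0:ℝ), ε < c + 1 := eventually_lt_nhds (by linarith)
    filter_upwards [self_mem_nhdsWithin, hev.filter_mono nhdsWithin_le_nhds]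
      with ε (hε : 0 < ε) hεc
    have h1 : -1 ≤ c - ε := by linarith
    have h2 : c - ε ≤ c + ε := by linarith
    rw [hu]
    simp only
    rw [measure_Icc_eq _ _ h1 h2, hcc, ENNReal.toReal_ofReal
      (by apply sub_nonneg.mpr; apply Real.exp_le_exp.mpr; linarith)]
    rw [hg]
    congr 2 <;> ring
  exact ((hslope.congr' heq).liminf_eq)

lemma sed_gamma : Gamma1 (volume.withDensity fun x => ENNReal.ofReal (shiftedExpDensity x)) = 2 := by
  set ν := volume.withDensity fun x => ENNReal.ofReal (shiftedExpDensity x) with hν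
  set S := {x | ∃ a b : ℝ, a ≤ b ∧ x = intervalPerim ν a b} with hS
  have hub : ∀ x ∈ S, x ≤ 2 := by
    rintro x ⟨a, b, hab, rfl⟩
    exact sed_perim_le_two a b hab
  have hbdd : BddAbove S := ⟨2, hub⟩
  have hmem : ∀ δ : ℝ, 0 < δ → 2 * Real.exp (-δ) ∈ S := by
    intro δ hδ
    refine ⟨-1 + δ, -1 + δ, le_rfl, ?_⟩
    rw [sed_perim_eq (-1 + δ) (by linarith)]
    congr 2
    ring
  apply le_antisymm
  · exact csSup_le ⟨_, hmem 1 one_pos⟩ hub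
  · have ht : Tendsto (fun δ : ℝ => 2 * Real.exp (-δ)) (nhdsWithin 0 (Ioi 0)) (nhds 2) := by
      have : Tendsto (fun δ : ℝ => 2 * Real.exp (-δ)) (nhds 0) (nhds (2 * Real.exp (-0))) :=
        (Real.continuous_exp.comp continuous_neg).const_smul (2:ℝ) |>.tendsto 0
      simpa using this.mono_left nhdsWithin_le_nhds
    refine le_of_tendsto ht ?_
    filter_upwards [self_mem_nhdsWithin] with δ (hδ : 0 < δ)
    exact le_csSup hbdd (hmem δ hδ)

theorem shifted_exponential_extremal (μ : Measure ℝ)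
    (hμ : μ = volume.withDensity (fun x => ENNReal.ofReal (shiftedExpDensity x))) :
    IsProbabilityMeasure μ ∧
    IsLogConcaveFn1 shiftedExpDensity ∧
    (∫ x, x ∂μ = 0) ∧ (∫ x, x ^ 2 ∂μ = 1) ∧
    essSup shiftedExpDensity volume = 1 ∧
    Gamma1 μ = 2 := by
  subst hμ
  refine ⟨sed_prob, ⟨sed_nonneg, sed_logConcave.2⟩, ?_, ?_, sed_essSup, sed_gamma⟩
  · exact (sed_moment_withDensity fun x => x).trans sed_mean
  · exact (sed_moment_withDensity fun x => x ^ 2).trans sed_second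
end
end

section
/- Let μ = μ₁ ⊗ ⋯ ⊗ μ_n be a product probability measure on ℝ^n, where each μ_k has a density g_k ∈ L^∞(ℝ). Then for every convex set A ⊂ ℝ^n and every ε > 0, μ((A+εB₂ⁿ)\A) ≤ 2ε Σ_{k=1}^n ‖g_k‖_∞. Consequently μ⁺(∂A) ≤ 2 Σ_{k=1}^n ‖g_k‖_∞ for every convex set A, and Γ(μ) ≤ 2 Σ_{k=1}^n ‖g_k‖_∞. -/
open MeasureTheory Metric Filter Set Pointwise

noncomputable section

abbrev Euc (n : ℕ) := EuclideanSpace ℝ (Fin n)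

/-- The `μ`-perimeter `μ⁺(∂A) = liminf_{ε→0⁺} μ((A + εB₂ⁿ) \ A) / ε`. -/
def muPerim {n : ℕ} (μ : Measure (Euc n)) (A : Set (Euc n)) : ℝ :=
  liminf (fun ε : ℝ => (μ ((A + closedBall (0 : Euc n) ε) \ A)).toReal / ε)
    (nhdsWithin 0 (Ioi 0))

/-- A convex body: compact convex set with nonempty interior. -/
def IsConvexBody {n : ℕ} (A : Set (Euc n)) : Prop :=
  Convex ℝ A ∧ IsCompact A ∧ (interior A).Nonempty

/-- The maximal perimeter constant `Γ(μ)`. -/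
def Gamma {n : ℕ} (μ : Measure (Euc n)) : ℝ :=
  sSup {x | ∃ A : Set (Euc n), IsConvexBody A ∧ x = muPerim μ A}

section Helpers

lemma volume_real_ne_zero : (volume : Measure ℝ) ≠ 0 := by
  intro h
  have := congrArg (fun m : Measure ℝ => m (Icc (0:ℝ) 1)) h
  simp [Real.volume_Icc] at this

lemma aux_isBounded {g : ℝ → ℝ} (hb : ∃ C : ℝ, ∀ᵐ t ∂(volume : Measure ℝ), g t ≤ C) :
    IsBoundedUnder (· ≤ ·) (ae (volume : Measure ℝ)) g := by
  obtain ⟨C, hC⟩ := hb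
  exact ⟨C, by simpa [Filter.eventually_map] using hC⟩

lemma essSup_nonneg_of_nonneg {g : ℝ → ℝ} (hg0 : ∀ t, 0 ≤ g t)
    (hb : ∃ C : ℝ, ∀ᵐ t ∂(volume : Measure ℝ), g t ≤ C) :
    0 ≤ essSup g volume := by
  haveI : (ae (volume : Measure ℝ)).NeBot := ae_neBot.mpr volume_real_ne_zero
  exact le_limsup_of_frequently_le ((Eventually.of_forall hg0).frequently) (aux_isBounded hb)

lemma ae_le_essSup_real {g : ℝ → ℝ} (hb : ∃ C : ℝ, ∀ᵐ t ∂(volume : Measure ℝ), g t ≤ C) :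
    ∀ᵐ t ∂(volume : Measure ℝ), g t ≤ essSup g volume :=
  ae_le_essSup (aux_isBounded hb)

lemma density_meas_le {μm : Measure ℝ} {g : ℝ → ℝ}
    (hgdens : μm = volume.withDensity (fun t => ENNReal.ofReal (g t)))
    (hb : ∃ C : ℝ, ∀ᵐ t ∂(volume : Measure ℝ), g t ≤ C)
    {E : Set ℝ} (hE : MeasurableSet E) :
    μm E ≤ ENNReal.ofReal (essSup g volume) * volume E := by
  subst hgdens
  rw [withDensity_apply _ hE]
  calc ∫⁻ t in E, ENNReal.ofReal (g t) ∂volume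
      ≤ ∫⁻ _ in E, ENNReal.ofReal (essSup g volume) ∂volume := by
        refine lintegral_mono_ae (ae_restrict_of_ae ?_)
        exact (ae_le_essSup_real hb).mono fun t ht => ENNReal.ofReal_le_ofReal ht
    _ = ENNReal.ofReal (essSup g volume) * volume E := by
        rw [setLIntegral_const]


lemma interval_dilate {I : Set ℝ} (hI : Convex ℝ I) {ε : ℝ} (hε : 0 < ε) :
    volume ((I + Icc (-ε) ε) \ I) ≤ ENNReal.ofReal (2 * ε) := by
  classical
  rcases I.eq_empty_or_nonempty with rfl | ⟨x0, hx0⟩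
  · simp
  have hoc : I.OrdConnected := hI.ordConnected
  set U1 : Set ℝ := if h : BddBelow I then Icc (sInf I - ε) (sInf I) else ∅ with hU1
  set U2 : Set ℝ := if h : BddAbove I then Icc (sSup I) (sSup I + ε) else ∅ with hU2
  have hsub : (I + Icc (-ε) ε) \ I ⊆ U1 ∪ U2 := by
    rintro t ⟨⟨s, hsI, u, hu, hsum⟩, htI⟩
    obtain rfl : s + u = t := hsum
    rw [mem_Icc] at hu
    rcases lt_trichotomy (s + u) s with hlt | heq | hgt
    · -- below I
      have hlb : ∀ y ∈ I, s + u ≤ y := by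
        intro y hy
        by_contra hyt
        push_neg at hyt
        exact htI (hoc.out hy hsI ⟨le_of_lt hyt, le_of_lt hlt⟩)
      have hbb : BddBelow I := ⟨s + u, hlb⟩
      left
      rw [hU1, dif_pos hbb, mem_Icc]
      constructor
      · have h1 : sInf I ≤ s := csInf_le hbb hsI
        linarith
      · exact le_csInf ⟨x0, hx0⟩ hlb
    · exact absurd (by rwa [heq]) htI
    · -- above I
      have hub : ∀ y ∈ I, y ≤ s + u := by
        intro y hy
        by_contra hyt
        push_neg at hyt
        exact htI (hoc.out hsI hy ⟨le_of_lt hgt, le_of_lt hyt⟩)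
      have hba : BddAbove I := ⟨s + u, hub⟩
      right
      rw [hU2, dif_pos hba, mem_Icc]
      constructor
      · exact csSup_le ⟨x0, hx0⟩ hub
      · have h1 : s ≤ sSup I := le_csSup hba hsI
        linarith
  have hU1v : volume U1 ≤ ENNReal.ofReal ε := by
    rw [hU1]; split_ifs with h
    · rw [Real.volume_Icc]
      exact ENNReal.ofReal_le_ofReal (by linarith)
    · simp
  have hU2v : volume U2 ≤ ENNReal.ofReal ε := by
    rw [hU2]; split_ifs with h
    · rw [Real.volume_Icc]
      exact ENNReal.ofReal_le_ofReal (by linarith)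
    · simp
  calc volume ((I + Icc (-ε) ε) \ I) ≤ volume (U1 ∪ U2) := measure_mono hsub
    _ ≤ volume U1 + volume U2 := measure_union_le _ _
    _ ≤ ENNReal.ofReal ε + ENNReal.ofReal ε := add_le_add hU1v hU2v
    _ = ENNReal.ofReal (2 * ε) := by
        rw [← ENNReal.ofReal_add hε.le hε.le]; ring_nf


/-- The segment `{x | x k ∈ [-ε,ε], x j = 0 for j ≠ k}` as the image of `Icc`. -/
def seg {n : ℕ} (k : Fin n) (ε : ℝ) : Set (Fin n → ℝ) :=
  (fun t => Pi.single k t) '' Icc (-ε) ε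

lemma insertNth_add' {m : ℕ} (k : Fin (m+1)) (t u : ℝ) (y z : Fin m → ℝ) :
    (k.insertNth (t + u) (y + z) : Fin (m+1) → ℝ) = k.insertNth t y + k.insertNth u z := by
  funext j
  cases j using k.succAboveCases <;> simp

lemma insertNth_smul' {m : ℕ} (k : Fin (m+1)) (c t : ℝ) (y : Fin m → ℝ) :
    (k.insertNth (c * t) (c • y) : Fin (m+1) → ℝ) = c • (k.insertNth t y : Fin (m+1) → ℝ) := by
  funext j
  cases j using k.succAboveCases <;> simp

lemma insertNth_single' {m : ℕ} (k : Fin (m+1)) (t : ℝ) :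
    (k.insertNth t 0 : Fin (m+1) → ℝ) = Pi.single k t := by
  funext j
  cases j using k.succAboveCases
  · simp
  · simp [Pi.single_eq_of_ne (Fin.succAbove_ne k _)]

lemma pi_single_continuous {n : ℕ} (k : Fin n) : Continuous (fun t : ℝ => (Pi.single k t : Fin n → ℝ)) := by
  apply continuous_pi
  intro j
  by_cases h : j = k
  · subst h; simpa using continuous_id'
  · simp only [Pi.single_eq_of_ne h]
    exact continuous_const

lemma seg_convex {n : ℕ} (k : Fin n) (ε : ℝ) : Convex ℝ (seg k ε) :=
  (convex_Icc _ _).linear_image (LinearMap.single ℝ (fun _ => ℝ) k)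

lemma seg_compact {n : ℕ} (k : Fin n) (ε : ℝ) : IsCompact (seg k ε) :=
  isCompact_Icc.image (pi_single_continuous k)

lemma zero_mem_seg {n : ℕ} (k : Fin n) {ε : ℝ} (hε : 0 < ε) : (0 : Fin n → ℝ) ∈ seg k ε :=
  ⟨0, by constructor <;> [linarith; linarith], by simp⟩

theorem key_step {n : ℕ} (μs : Fin n → Measure ℝ) [∀ i, IsProbabilityMeasure (μs i)]
    (k : Fin n) {gk : ℝ → ℝ}
    (hgdens : μs k = volume.withDensity (fun t => ENNReal.ofReal (gk t)))
    (hgbdd : ∃ C : ℝ, ∀ᵐ t ∂(volume : Measure ℝ), gk t ≤ C)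
    (hM0 : 0 ≤ essSup gk volume)
    {ε : ℝ} (hε : 0 < ε) {C : Set (Fin n → ℝ)} (hCc : Convex ℝ C) (hCcl : IsClosed C) :
    Measure.pi μs (C + seg k ε) ≤
      Measure.pi μs C + ENNReal.ofReal (2 * ε * essSup gk volume) := by
  obtain ⟨m, rfl⟩ : ∃ m, n = m + 1 := ⟨n - 1, by
    rcases n with _ | m
    · exact k.elim0
    · rfl⟩
  set M := essSup gk volume with hMdef
  set e := MeasurableEquiv.piFinSuccAbove (fun _ : Fin (m+1) => ℝ) k with he
  have hesymm : ∀ (t : ℝ) (y : Fin m → ℝ), e.symm (t, y) = k.insertNth t y := fun _ _ => rfl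
  set ν' := Measure.pi (fun j => μs (k.succAbove j)) with hν'
  set ρ := (μs k).prod ν' with hρ
  have hval : ∀ X : Set (Fin (m+1) → ℝ), Measure.pi μs X = ρ (⇑e.symm ⁻¹' X) := by
    intro X
    have h1 : ρ = (Measure.pi μs).map e := (measurePreserving_piFinSuccAbove μs k).map_eq.symm
    rw [h1, MeasurableEquiv.map_apply]
    congr 1
    ext x
    simp
  set D := ⇑e.symm ⁻¹' C with hD
  set T : Set (ℝ × (Fin m → ℝ)) := Icc (-ε) ε ×ˢ ({0} : Set (Fin m → ℝ)) with hT
  -- preimage of the sum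
  have hpre : ⇑e.symm ⁻¹' (C + seg k ε) = D + T := by
    ext ⟨t, y⟩
    constructor
    · rintro ⟨c, hc, s, ⟨u, hu, rfl⟩, hsum⟩
      have hkey : (k.insertNth (t - u) y : Fin (m+1) → ℝ) + Pi.single k u = k.insertNth t y := by
        rw [← insertNth_single' k u, ← insertNth_add', sub_add_cancel, add_zero]
      have hc' : c = (k.insertNth (t - u) y : Fin (m+1) → ℝ) := by
        have h2 : c + Pi.single k u =
            (k.insertNth (t - u) y : Fin (m+1) → ℝ) + Pi.single k u := by
          rw [hkey]; rw [hesymm] at hsum; exact hsum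
        exact add_right_cancel h2
      refine ⟨(t - u, y), ?_, (u, 0), ⟨hu, rfl⟩, by ext <;> simp⟩
      show e.symm (t - u, y) ∈ C
      rw [hesymm, ← hc']
      exact hc
    · rintro ⟨⟨a, y'⟩, ha, ⟨u, z⟩, ⟨hu, hz⟩, hsum⟩
      obtain rfl : z = 0 := hz
      obtain ⟨rfl, rfl⟩ : a + u = t ∧ y' + 0 = y := Prod.mk.injEq .. ▸ Prod.ext_iff.mp hsum
      refine ⟨e.symm (a, y'), ha, Pi.single k u, ⟨u, hu, rfl⟩, ?_⟩
      show e.symm (a, y') + Pi.single k u = e.symm (a + u, y' + 0)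
      rw [hesymm, hesymm, ← insertNth_single' k u, ← insertNth_add']
  -- D is convex and closed
  have hcont_symm : Continuous (fun p : ℝ × (Fin m → ℝ) => (k.insertNth p.1 p.2 : Fin (m+1) → ℝ)) := by
    apply continuous_pi
    intro j
    cases j using k.succAboveCases
    · simpa using continuous_fst
    · simpa using (continuous_apply _).comp' continuous_snd
  have hesymm_fun : ⇑e.symm = fun p : ℝ × (Fin m → ℝ) => (k.insertNth p.1 p.2 : Fin (m+1) → ℝ) := by
    funext p; obtain ⟨t, y⟩ := p; exact hesymm t y
  have hDcl : IsClosed D := by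
    rw [hD, hesymm_fun]; exact hCcl.preimage hcont_symm
  have hDconv : Convex ℝ D := by
    intro p hp q hq a b ha hb hab
    obtain ⟨t, y⟩ := p; obtain ⟨u, z⟩ := q
    show e.symm (a • (t, y) + b • (u, z)) ∈ C
    have : e.symm (a • (t, y) + b • (u, z)) = a • e.symm (t, y) + b • e.symm (u, z) := by
      rw [hesymm, hesymm, hesymm]
      show (k.insertNth (a * t + b * u) (a • y + b • z) : Fin (m+1) → ℝ) = _
      rw [insertNth_add', insertNth_smul', insertNth_smul']
    rw [this]
    exact hCc hp hq ha hb hab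
  have hDmeas : MeasurableSet D := hDcl.measurableSet
  have hCScl : IsClosed (C + seg k ε) :=
    IsClosed.add_right_of_isCompact hCcl (seg_compact k ε)
  have hDTmeas : MeasurableSet (D + T) := by
    rw [← hpre, hesymm_fun]
    exact (hCScl.preimage hcont_symm).measurableSet
  -- sections
  have hsec : ∀ y : Fin m → ℝ,
      (fun t : ℝ => (t, y)) ⁻¹' (D + T) = ((fun t : ℝ => (t, y)) ⁻¹' D) + Icc (-ε) ε := by
    intro y
    ext t
    constructor
    · rintro ⟨⟨a, y'⟩, ha, ⟨u, z⟩, ⟨hu, hz⟩, hsum⟩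
      obtain rfl : z = 0 := hz
      obtain ⟨rfl, hy⟩ : a + u = t ∧ y' + 0 = y := Prod.mk.injEq .. ▸ Prod.ext_iff.mp hsum
      obtain rfl : y' = y := by rwa [add_zero] at hy
      exact ⟨a, ha, u, hu, rfl⟩
    · rintro ⟨a, ha, u, hu, rfl⟩
      exact ⟨(a, y), ha, (u, 0), ⟨hu, rfl⟩, by ext <;> simp⟩
  -- per-section bound
  have hsecbd : ∀ y : Fin m → ℝ,
      μs k (((fun t : ℝ => (t, y)) ⁻¹' D) + Icc (-ε) ε) ≤
        μs k ((fun t : ℝ => (t, y)) ⁻¹' D) + ENNReal.ofReal (2 * ε * M) := by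
    intro y
    set I := (fun t : ℝ => (t, y)) ⁻¹' D with hI
    have hIconv : Convex ℝ I := by
      intro t1 h1 t2 h2 a b ha hb hab
      have h3 : a • ((t1 : ℝ), y) + b • ((t2 : ℝ), y) = (a • t1 + b • t2, y) := by
        have : a • y + b • y = y := by rw [← add_smul, hab, one_smul]
        simp [Prod.ext_iff, this]
      have := hDconv h1 h2 ha hb hab
      rw [h3] at this
      exact this
    have hIcl : IsClosed I := hDcl.preimage (continuous_id.prodMk continuous_const)
    have hJconv : Convex ℝ (I + Icc (-ε) ε) := hIconv.add (convex_Icc _ _)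
    have hJmeas : MeasurableSet (I + Icc (-ε) ε) :=
      (convex_iff_ordConnected.mp hJconv).measurableSet
    have hdiffmeas : MeasurableSet ((I + Icc (-ε) ε) \ I) := hJmeas.diff hIcl.measurableSet
    have hsplit : I + Icc (-ε) ε ⊆ I ∪ ((I + Icc (-ε) ε) \ I) := fun x hx => by
      by_cases h : x ∈ I
      · exact Or.inl h
      · exact Or.inr ⟨hx, h⟩
    calc μs k (I + Icc (-ε) ε) ≤ μs k (I ∪ ((I + Icc (-ε) ε) \ I)) := measure_mono hsplit
      _ ≤ μs k I + μs k ((I + Icc (-ε) ε) \ I) := measure_union_le _ _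
      _ ≤ μs k I + ENNReal.ofReal M * volume ((I + Icc (-ε) ε) \ I) := by
          exact add_le_add_right (density_meas_le hgdens hgbdd hdiffmeas) _
      _ ≤ μs k I + ENNReal.ofReal M * ENNReal.ofReal (2 * ε) := by
          exact add_le_add_right (mul_le_mul_right (interval_dilate hIconv hε) _) _
      _ = μs k I + ENNReal.ofReal (2 * ε * M) := by
          rw [← ENNReal.ofReal_mul hM0, mul_comm]
  -- put everything together
  haveI : IsProbabilityMeasure ν' := by rw [hν']; infer_instance
  calc Measure.pi μs (C + seg k ε) = ρ (D + T) := by rw [hval, hpre]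
    _ = ∫⁻ y, μs k ((fun t : ℝ => (t, y)) ⁻¹' (D + T)) ∂ν' := Measure.prod_apply_symm hDTmeas
    _ = ∫⁻ y, μs k (((fun t : ℝ => (t, y)) ⁻¹' D) + Icc (-ε) ε) ∂ν' := by
        refine lintegral_congr fun y => by rw [hsec y]
    _ ≤ ∫⁻ y, (μs k ((fun t : ℝ => (t, y)) ⁻¹' D) + ENNReal.ofReal (2 * ε * M)) ∂ν' :=
        lintegral_mono fun y => hsecbd y
    _ = (∫⁻ y, μs k ((fun t : ℝ => (t, y)) ⁻¹' D) ∂ν') + ENNReal.ofReal (2 * ε * M) := by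
        rw [lintegral_add_right _ measurable_const, lintegral_const, measure_univ, mul_one]
    _ = Measure.pi μs C + ENNReal.ofReal (2 * ε * M) := by
        rw [← Measure.prod_apply_symm hDmeas, ← hval]

theorem telescope {n : ℕ} (μs : Fin n → Measure ℝ) [∀ i, IsProbabilityMeasure (μs i)]
    (g : Fin n → ℝ → ℝ)
    (hg0 : ∀ k, ∀ t, 0 ≤ g k t)
    (hgdens : ∀ k, μs k = volume.withDensity (fun t => ENNReal.ofReal (g k t)))
    (hgbdd : ∀ k, ∃ C : ℝ, ∀ᵐ t ∂(volume : Measure ℝ), g k t ≤ C)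
    {ε : ℝ} (hε : 0 < ε) (s : Finset (Fin n)) :
    ∀ C : Set (Fin n → ℝ), Convex ℝ C → IsClosed C →
      Measure.pi μs (C + ∑ k ∈ s, seg k ε) ≤
        Measure.pi μs C + ∑ k ∈ s, ENNReal.ofReal (2 * ε * essSup (g k) volume) := by
  classical
  induction s using Finset.induction_on with
  | empty => intro C _ _; simp
  | insert a s' ha ih =>
    intro C hCc hCcl
    rw [Finset.sum_insert ha, Finset.sum_insert ha, ← add_assoc]
    have hM0 : 0 ≤ essSup (g a) volume := essSup_nonneg_of_nonneg (hg0 a) (hgbdd a)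
    have h1 := ih (C + seg a ε) (hCc.add (seg_convex a ε))
      (IsClosed.add_right_of_isCompact hCcl (seg_compact a ε))
    have h2 := key_step μs a (hgdens a) (hgbdd a) hM0 hε hCc hCcl
    calc Measure.pi μs ((C + seg a ε) + ∑ k ∈ s', seg k ε)
        ≤ Measure.pi μs (C + seg a ε) + ∑ k ∈ s', ENNReal.ofReal (2 * ε * essSup (g k) volume) :=
          h1
      _ ≤ (Measure.pi μs C + ENNReal.ofReal (2 * ε * essSup (g a) volume)) +
            ∑ k ∈ s', ENNReal.ofReal (2 * ε * essSup (g k) volume) := add_le_add_left h2 _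
      _ = Measure.pi μs C + (ENNReal.ofReal (2 * ε * essSup (g a) volume) +
            ∑ k ∈ s', ENNReal.ofReal (2 * ε * essSup (g k) volume)) := by rw [add_assoc]

lemma mem_sum_seg {n : ℕ} {x : Fin n → ℝ} {ε : ℝ} (h : ∀ j, |x j| ≤ ε) :
    x ∈ ∑ k : Fin n, seg k ε := by
  rw [Set.mem_fintype_sum]
  refine ⟨fun k => Pi.single k (x k), fun k => ⟨x k, ?_, rfl⟩, Finset.univ_sum_single x⟩
  rw [mem_Icc]
  exact abs_le.mp (h k)

lemma pi_ac {n : ℕ} (μs : Fin n → Measure ℝ) [∀ i, SigmaFinite (μs i)]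
    (h : ∀ i, μs i ≪ volume) :
    Measure.pi μs ≪ Measure.pi (fun _ : Fin n => (volume : Measure ℝ)) := by
  induction n with
  | zero =>
    rw [Measure.pi_of_empty μs, Measure.pi_of_empty _]
  | succ m ih =>
    set e := MeasurableEquiv.piFinSuccAbove (fun _ : Fin (m+1) => ℝ) 0 with he
    have h1 : Measure.pi μs =
        Measure.map e.symm (((μs 0)).prod (Measure.pi fun j => μs (Fin.succAbove 0 j))) := by
      rw [← (measurePreserving_piFinSuccAbove μs 0).map_eq, MeasurableEquiv.map_symm_map]
    have h2 : Measure.pi (fun _ : Fin (m+1) => (volume : Measure ℝ)) =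
        Measure.map e.symm ((volume : Measure ℝ).prod
          (Measure.pi fun _ : Fin m => (volume : Measure ℝ))) := by
      rw [← (measurePreserving_piFinSuccAbove (fun _ : Fin (m+1) => (volume : Measure ℝ)) 0).map_eq,
        MeasurableEquiv.map_symm_map]
    rw [h1, h2]
    exact ((h 0).prod (ih (fun j => μs (Fin.succAbove 0 j)) (fun j => h _))).map
      e.symm.measurable

lemma coord_abs_le_norm {n : ℕ} (x : Euc n) (j : Fin n) : |x j| ≤ ‖x‖ := by
  rw [EuclideanSpace.norm_eq]
  have h1 : ‖x j‖ = |x j| := Real.norm_eq_abs _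
  rw [← h1, ← Real.sqrt_sq (norm_nonneg (x j))]
  exact Real.sqrt_le_sqrt (Finset.single_le_sum (fun i _ => sq_nonneg ‖x i‖) (Finset.mem_univ j))

end Helpers

theorem product_measure_perimeter_bound {n : ℕ}
    (μs : Fin n → Measure ℝ) [∀ k, IsProbabilityMeasure (μs k)]
    (g : Fin n → ℝ → ℝ)
    (hg0 : ∀ k, ∀ t, 0 ≤ g k t)
    (hgdens : ∀ k, μs k = volume.withDensity (fun t => ENNReal.ofReal (g k t)))
    (hgbdd : ∀ k, ∃ C : ℝ, ∀ᵐ t ∂(volume : Measure ℝ), g k t ≤ C)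
    (μ : Measure (Euc n))
    (hμ : μ = Measure.map (MeasurableEquiv.toLp 2 (Fin n → ℝ)) (Measure.pi μs)) :
    (∀ A : Set (Euc n), Convex ℝ A → ∀ ε : ℝ, 0 < ε →
      (μ ((A + closedBall (0 : Euc n) ε) \ A)).toReal ≤
        2 * ε * ∑ k, essSup (g k) volume) ∧
    (∀ A : Set (Euc n), Convex ℝ A → muPerim μ A ≤ 2 * ∑ k, essSup (g k) volume) ∧
    Gamma μ ≤ 2 * ∑ k, essSup (g k) volume := by
  have hessnn : ∀ k, 0 ≤ essSup (g k) volume :=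
    fun k => essSup_nonneg_of_nonneg (hg0 k) (hgbdd k)
  have hsumnn : 0 ≤ ∑ k, essSup (g k) volume :=
    Finset.sum_nonneg fun k _ => hessnn k
  set e0 := (MeasurableEquiv.toLp 2 (Fin n → ℝ)).symm with he0
  have hmap : ∀ X : Set (Euc n), μ X = Measure.pi μs (⇑e0.symm ⁻¹' X) := by
    intro X; rw [hμ, MeasurableEquiv.map_apply]; rfl
  have hadd : ∀ X Y : Set (Euc n),
      ⇑e0.symm ⁻¹' (X + Y) = (⇑e0.symm ⁻¹' X) + (⇑e0.symm ⁻¹' Y) := by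
    intro X Y
    ext x
    constructor
    · rintro ⟨u, hu, v, hv, hsum⟩
      refine ⟨e0 u, ?_, e0 v, ?_, ?_⟩
      · show e0.symm (e0 u) ∈ X; rw [e0.symm_apply_apply]; exact hu
      · show e0.symm (e0 v) ∈ Y; rw [e0.symm_apply_apply]; exact hv
      · apply e0.symm.injective
        show e0.symm (e0 u + e0 v) = e0.symm x
        calc e0.symm (e0 u + e0 v) = e0.symm (e0 u) + e0.symm (e0 v) := rfl
          _ = u + v := by rw [e0.symm_apply_apply, e0.symm_apply_apply]
          _ = e0.symm x := hsum
    · rintro ⟨u, hu, v, hv, rfl⟩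
      exact ⟨e0.symm u, hu, e0.symm v, hv, rfl⟩
  -- Part 1
  have part1 : ∀ A : Set (Euc n), Convex ℝ A → ∀ ε : ℝ, 0 < ε →
      (μ ((A + closedBall (0 : Euc n) ε) \ A)).toReal ≤
        2 * ε * ∑ k, essSup (g k) volume := by
    intro A hA ε hε
    set B := ⇑e0.symm ⁻¹' A with hBdef
    have hBconv : Convex ℝ B := by
      intro x hx y hy a b ha hb hab
      show e0.symm (a • x + b • y) ∈ A
      have hlin : e0.symm (a • x + b • y) = a • e0.symm x + b • e0.symm y := rfl
      rw [hlin]; exact hA hx hy ha hb hab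
    set P := ⇑e0.symm ⁻¹' (closedBall (0 : Euc n) ε) with hPdef
    have hPQ : P ⊆ ∑ k : Fin n, seg k ε := by
      intro x hx
      apply mem_sum_seg
      intro j
      have hx' : e0.symm x ∈ closedBall (0 : Euc n) ε := hx
      have h1 : ‖e0.symm x‖ ≤ ε := by
        rwa [mem_closedBall_zero_iff] at hx'
      have h2 : |x j| ≤ ‖e0.symm x‖ := coord_abs_le_norm (e0.symm x) j
      linarith
    set D := closure B with hDdef
    have hDconv : Convex ℝ D := hBconv.closure
    have hXpre : ⇑e0.symm ⁻¹' ((A + closedBall (0 : Euc n) ε) \ A) = (B + P) \ B := by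
      rw [preimage_diff, hadd]
    have hsubX : (B + P) \ B ⊆ ((D + ∑ k : Fin n, seg k ε) \ D) ∪ (D \ B) := by
      rintro x ⟨hx1, hx2⟩
      by_cases hxD : x ∈ D
      · exact Or.inr ⟨hxD, hx2⟩
      · obtain ⟨u, hu, v, hv, rfl⟩ := hx1
        exact Or.inl ⟨⟨u, subset_closure hu, v, hPQ hv, rfl⟩, hxD⟩
    have hfront : Measure.pi μs (D \ B) = 0 := by
      have hsub2 : D \ B ⊆ frontier B := fun x hx => ⟨hx.1, fun h => hx.2 (interior_subset h)⟩
      have hac : Measure.pi μs ≪ Measure.pi (fun _ : Fin n => (volume : Measure ℝ)) :=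
        pi_ac μs (fun i => (hgdens i) ▸ withDensity_absolutelyContinuous volume _)
      have hvol : Measure.pi (fun _ : Fin n => (volume : Measure ℝ)) (frontier B) = 0 := by
        rw [← MeasureTheory.volume_pi]
        exact hBconv.addHaar_frontier volume
      exact measure_mono_null hsub2 (hac hvol)
    have hD0 : (0 : Fin n → ℝ) ∈ ∑ k : Fin n, seg k ε := by
      apply mem_sum_seg
      intro j
      simp [le_of_lt hε]
    have hDsub : D ⊆ D + ∑ k : Fin n, seg k ε := fun x hx => ⟨x, hx, 0, hD0, add_zero x⟩
    have htel := telescope μs g hg0 hgdens hgbdd hε Finset.univ D hDconv isClosed_closure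
    have hdiff : Measure.pi μs ((D + ∑ k : Fin n, seg k ε) \ D) ≤
        ∑ k : Fin n, ENNReal.ofReal (2 * ε * essSup (g k) volume) := by
      rw [measure_diff hDsub isClosed_closure.measurableSet.nullMeasurableSet
        (measure_ne_top _ _)]
      exact tsub_le_iff_left.mpr htel
    have hfin : μ ((A + closedBall (0 : Euc n) ε) \ A) ≤
        ENNReal.ofReal (2 * ε * ∑ k, essSup (g k) volume) := by
      rw [hmap, hXpre]
      calc Measure.pi μs ((B + P) \ B)
          ≤ Measure.pi μs (((D + ∑ k : Fin n, seg k ε) \ D) ∪ (D \ B)) := measure_mono hsubX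
        _ ≤ Measure.pi μs ((D + ∑ k : Fin n, seg k ε) \ D) + Measure.pi μs (D \ B) :=
            measure_union_le _ _
        _ ≤ (∑ k : Fin n, ENNReal.ofReal (2 * ε * essSup (g k) volume)) + 0 :=
            add_le_add hdiff (le_of_eq hfront)
        _ = ∑ k : Fin n, ENNReal.ofReal (2 * ε * essSup (g k) volume) := add_zero _
        _ = ENNReal.ofReal (∑ k : Fin n, 2 * ε * essSup (g k) volume) :=
            (ENNReal.ofReal_sum_of_nonneg fun k _ =>
              mul_nonneg (by linarith) (hessnn k)).symm
        _ = ENNReal.ofReal (2 * ε * ∑ k, essSup (g k) volume) := by rw [← Finset.mul_sum]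
    have h2eps : 0 ≤ 2 * ε * ∑ k, essSup (g k) volume :=
      mul_nonneg (by linarith) hsumnn
    exact ENNReal.toReal_le_of_le_ofReal h2eps hfin
  -- Part 2
  have part2 : ∀ A : Set (Euc n), Convex ℝ A →
      muPerim μ A ≤ 2 * ∑ k, essSup (g k) volume := by
    intro A hA
    unfold muPerim
    have hb : ∀ᶠ εx in nhdsWithin (0 : ℝ) (Ioi 0),
        (μ ((A + closedBall (0 : Euc n) εx) \ A)).toReal / εx ≤
          2 * ∑ k, essSup (g k) volume := by
      filter_upwards [self_mem_nhdsWithin] with εx hεx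
      have hεx' : (0 : ℝ) < εx := hεx
      rw [div_le_iff₀ hεx']
      calc (μ ((A + closedBall (0 : Euc n) εx) \ A)).toReal
          ≤ 2 * εx * ∑ k, essSup (g k) volume := part1 A hA εx hεx'
        _ = 2 * (∑ k, essSup (g k) volume) * εx := by ring
    have hbdd : IsBoundedUnder (· ≥ ·) (nhdsWithin (0 : ℝ) (Ioi 0))
        (fun εx : ℝ => (μ ((A + closedBall (0 : Euc n) εx) \ A)).toReal / εx) := by
      refine ⟨0, ?_⟩
      rw [Filter.eventually_map]
      filter_upwards [self_mem_nhdsWithin] with εx hεx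
      exact div_nonneg ENNReal.toReal_nonneg (le_of_lt hεx)
    exact liminf_le_of_frequently_le hb.frequently hbdd
  refine ⟨part1, part2, ?_⟩
  -- Part 3
  apply Real.sSup_le
  · rintro x ⟨A, hAbody, rfl⟩
    exact part2 A hAbody.1
  · linarith
end
end

section
/- Let μ be a centered log-concave probability measure on ℝ^n with density f. Then for every t ≥ 6n, μ(R_t(μ)) ≥ 1 − e^{−t/5}, where R_t(μ) = {x ∈ ℝ^n : f(x) ≥ e^{−t}‖f‖_∞}. -/
open MeasureTheory Metric Filter Set

noncomputable section

/-- `f` is a log-concave (nonnegative) function on `ℝ^n`. -/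
def IsLogConcaveFn {n : ℕ} (f : Euc n → ℝ) : Prop :=
  (∀ x, 0 ≤ f x) ∧
  ∀ x y : Euc n, ∀ τ : ℝ, 0 ≤ τ → τ ≤ 1 →
    f x ^ τ * f y ^ (1 - τ) ≤ f (τ • x + (1 - τ) • y)

/-- The super-level set `R_t(μ) = {x : f x ≥ e^{-t} ‖f‖_∞}` of a density `f`. -/
def superLevelSet {n : ℕ} (f : Euc n → ℝ) (t : ℝ) : Set (Euc n) :=
  {x | Real.exp (-t) * essSup f volume ≤ f x}

open scoped ENNReal NNReal

namespace LCProof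

lemma mix_le {n : ℕ} {f : Euc n → ℝ} (hf : IsLogConcaveFn f) {x y : Euc n} {τ : ℝ}
    (h0 : 0 ≤ τ) (h1 : τ ≤ 1) {a b : ℝ} (ha : 0 ≤ a) (hb : 0 ≤ b)
    (hax : a ≤ f x) (hby : b ≤ f y) :
    a ^ τ * b ^ (1 - τ) ≤ f (τ • x + (1 - τ) • y) := by
  refine le_trans ?_ (hf.2 x y τ h0 h1)
  exact mul_le_mul (Real.rpow_le_rpow ha hax h0) (Real.rpow_le_rpow hb hby (by linarith))
    (Real.rpow_nonneg hb _) (Real.rpow_nonneg (le_trans ha hax) _)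

lemma mix_lt {n : ℕ} {f : Euc n → ℝ} (hf : IsLogConcaveFn f) {x y : Euc n} {τ : ℝ}
    (h0 : 0 < τ) (h1 : τ < 1) {a b : ℝ} (ha : 0 ≤ a) (hb : 0 ≤ b)
    (hax : a < f x) (hby : b < f y) :
    a ^ τ * b ^ (1 - τ) < f (τ • x + (1 - τ) • y) := by
  refine lt_of_lt_of_le ?_ (hf.2 x y τ h0.le h1.le)
  exact mul_lt_mul'' (Real.rpow_lt_rpow ha hax h0) (Real.rpow_lt_rpow hb hby (by linarith))
    (Real.rpow_nonneg ha _) (Real.rpow_nonneg hb _)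

lemma convex_lt {n : ℕ} {f : Euc n → ℝ} (hf : IsLogConcaveFn f) {c : ℝ} (hc : 0 ≤ c) :
    Convex ℝ {x : Euc n | c < f x} := by
  intro x hx y hy a b ha hb hab
  rcases eq_or_lt_of_le ha with rfl | ha'
  · simpa [show b = 1 by linarith] using hy
  rcases eq_or_lt_of_le hb with rfl | hb'
  · simpa [show a = 1 by linarith] using hx
  have hb1 : b = 1 - a := by linarith
  subst hb1
  have := mix_lt hf ha' (by linarith) hc hc hx hy
  calc c = c ^ a * c ^ (1 - a) := by
        rcases eq_or_lt_of_le hc with rfl | hc'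
        · rw [Real.zero_rpow (ne_of_gt ha')]; ring
        · rw [← Real.rpow_add hc']; norm_num
    _ < f (a • x + (1 - a) • y) := this
    _ = f (a • x + (1-a) • y) := rfl

lemma convex_le {n : ℕ} {f : Euc n → ℝ} (hf : IsLogConcaveFn f) {c : ℝ} (hc : 0 < c) :
    Convex ℝ {x : Euc n | c ≤ f x} := by
  intro x hx y hy a b ha hb hab
  have hb1 : b = 1 - a := by linarith
  subst hb1
  have := mix_le hf ha (by linarith) hc.le hc.le hx hy
  calc c = c ^ a * c ^ (1 - a) := by rw [← Real.rpow_add hc]; norm_num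
    _ ≤ f (a • x + (1 - a) • y) := this

lemma nullMeasurable_of_logConcave {n : ℕ} {f : Euc n → ℝ} (hf : IsLogConcaveFn f) :
    NullMeasurable f (volume : Measure (Euc n)) := by
  have key : ∀ c : ℝ, NullMeasurableSet {x : Euc n | c < f x} volume := by
    intro c
    rcases lt_or_ge c 0 with hc | hc
    · have : {x : Euc n | c < f x} = univ := by
        ext x; simp [lt_of_lt_of_le hc (hf.1 x)]
      rw [this]; exact MeasurableSet.univ.nullMeasurableSet
    · exact (convex_lt hf hc).nullMeasurableSet _
  exact measurable_of_Ioi (δ := NullMeasurableSpace (Euc n) volume) (f := f) key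

lemma aemeasurable_of_logConcave {n : ℕ} {f : Euc n → ℝ} (hf : IsLogConcaveFn f) :
    AEMeasurable f (volume : Measure (Euc n)) :=
  (nullMeasurable_of_logConcave hf).aemeasurable

theorem lintegral_image_eq_lintegral_abs_deriv_mul {s : Set ℝ} {f f' : ℝ → ℝ}
    (hs : MeasurableSet s) (hf' : ∀ x ∈ s, HasDerivWithinAt f (f' x) s x) (hf : InjOn f s)
    (g : ℝ → ℝ≥0∞) :
    ∫⁻ x in f '' s, g x = ∫⁻ x in s, ENNReal.ofReal |f' x| * g (f x) := by
  simpa only [ContinuousLinearMap.det_toSpanSingleton] using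
    MeasureTheory.lintegral_image_eq_lintegral_abs_det_fderiv_mul volume hs
      (fun x hx => (hf' x hx).hasFDerivWithinAt) hf g

end LCProof
theorem measure_superLevelSet_ge {n : ℕ} (f : Euc n → ℝ) (μ : Measure (Euc n))
    [IsProbabilityMeasure μ]
    (hf : IsLogConcaveFn f)
    (hμ : μ = volume.withDensity (fun x => ENNReal.ofReal (f x)))
    (hcent : ∫ x, x ∂μ = 0)
    (t : ℝ) (ht : 6 * n ≤ t) :
    1 - Real.exp (-t / 5) ≤ (μ (superLevelSet f t)).toReal := by
  classical
  rcases le_or_gt (1 - Real.exp (-t / 5)) 0 with htriv | htriv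
  · exact le_trans htriv ENNReal.toReal_nonneg
  have ht0 : 0 < t := by
    by_contra h
    push_neg at h
    have : (1:ℝ) ≤ Real.exp (-t/5) := Real.one_le_exp (by linarith)
    linarith
  have hfm : AEMeasurable f (volume : Measure (Euc n)) := LCProof.aemeasurable_of_logConcave hf
  have hnn : (0 : Euc n → ℝ) ≤ᵐ[(volume : Measure (Euc n))] f := ae_of_all _ hf.1
  have htot : ∫⁻ x, ENNReal.ofReal (f x) ∂(volume : Measure (Euc n)) = 1 := by
    have h1 : μ univ = 1 := measure_univ
    rw [hμ, withDensity_apply _ MeasurableSet.univ, Measure.restrict_univ] at h1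
    exact h1
  set W : ℝ → ℝ≥0∞ := fun s => volume {x : Euc n | s < f x} with hWdef
  have layer : ∫⁻ s in Ioi (0:ℝ), W s = 1 := by
    rw [← lintegral_eq_lintegral_meas_lt volume hnn hfm]
    exact htot
  -- there is a positive level with positive measure
  have hεex : ∃ ε : ℝ, 0 < ε ∧ W ε ≠ 0 := by
    by_contra h
    push_neg at h
    have h0 : volume {x : Euc n | 0 < f x} = 0 := by
      refine measure_mono_null (fun x hx => ?_)
        (measure_iUnion_null (s := fun m : ℕ => {x : Euc n | (1:ℝ)/(m+1) < f x})
          (fun m => h _ (by positivity)))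
      obtain ⟨m, hm⟩ := exists_nat_one_div_lt (show (0:ℝ) < f x from hx)
      exact mem_iUnion.2 ⟨m, hm⟩
    have hzero : ∫⁻ x, ENNReal.ofReal (f x) ∂(volume : Measure (Euc n)) = 0 := by
      have hae : ∀ᵐ x ∂(volume : Measure (Euc n)), ENNReal.ofReal (f x) = (0:ℝ≥0∞) := by
        have h2 : ∀ᵐ x ∂(volume : Measure (Euc n)), ¬ (0 < f x) := by
          rw [ae_iff]
          simpa using h0
        filter_upwards [h2] with x hx
        simp [ENNReal.ofReal_eq_zero, le_of_not_gt hx]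
      calc ∫⁻ x, ENNReal.ofReal (f x) ∂(volume : Measure (Euc n))
          = ∫⁻ _, (0:ℝ≥0∞) ∂(volume : Measure (Euc n)) := lintegral_congr_ae hae
        _ = 0 := lintegral_zero
    rw [htot] at hzero
    exact one_ne_zero hzero
  obtain ⟨ε, hε, hWε⟩ := hεex
  -- a ball on which f > ε
  have hball : ∃ (x1 : Euc n) (r : ℝ), 0 < r ∧ ball x1 r ⊆ {x : Euc n | ε < f x} := by
    have hK : Convex ℝ {x : Euc n | ε < f x} := LCProof.convex_lt hf hε.le
    have hint : (interior {x : Euc n | ε < f x}).Nonempty := by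
      by_contra hemp
      have hne : affineSpan ℝ {x : Euc n | ε < f x} ≠ ⊤ := by
        intro htop
        exact hemp (hK.interior_nonempty_iff_affineSpan_eq_top.2 htop)
      exact hWε (measure_mono_null (subset_affineSpan ℝ _)
        (MeasureTheory.Measure.addHaar_affineSubspace volume _ hne))
    obtain ⟨x1, hx1⟩ := hint
    obtain ⟨r, hr, hrsub⟩ := Metric.isOpen_iff.1 isOpen_interior x1 hx1
    exact ⟨x1, r, hr, hrsub.trans interior_subset⟩
  obtain ⟨x1, r, hr, hrsub⟩ := hball
  -- f is (pointwise) bounded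
  set v : ℝ≥0∞ := volume (ball (0 : Euc n) (r/2)) with hvdef
  have hv0 : v ≠ 0 := (measure_ball_pos volume _ (by linarith)).ne'
  have hvtop : v ≠ ⊤ := measure_ball_lt_top.ne
  set B : ℝ := (v⁻¹).toReal with hBdef
  have hCbound : ∀ z : Euc n, f z * ε ≤ B ^ (2:ℕ) := by
    intro z
    set m : Euc n := (2:ℝ)⁻¹ • z + (2:ℝ)⁻¹ • x1 with hm
    have hfw : ∀ w ∈ ball m (r/2), (f z * ε) ^ (2:ℝ)⁻¹ ≤ f w := by
      intro w hw
      have hx2 : x1 + (2:ℝ) • (w - m) ∈ ball x1 r := by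
        rw [mem_ball] at hw ⊢
        have hdist : dist (x1 + (2:ℝ) • (w - m)) x1 = 2 * dist w m := by
          rw [dist_eq_norm, add_sub_cancel_left, norm_smul, dist_eq_norm]
          simp
        rw [hdist]
        linarith
      have hfx : ε ≤ f (x1 + (2:ℝ) • (w - m)) := (hrsub hx2).le
      have hcomb : (2:ℝ)⁻¹ • z + (1 - (2:ℝ)⁻¹) • (x1 + (2:ℝ) • (w - m)) = w := by
        rw [hm]
        have h12 : (1 - (2:ℝ)⁻¹) = (2:ℝ)⁻¹ := by norm_num
        rw [h12, smul_add, smul_smul]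
        norm_num
        abel
      calc (f z * ε) ^ (2:ℝ)⁻¹ = f z ^ (2:ℝ)⁻¹ * ε ^ (1 - (2:ℝ)⁻¹) := by
            rw [Real.mul_rpow (hf.1 z) hε.le]
            norm_num
        _ ≤ f (((2:ℝ)⁻¹) • z + (1 - (2:ℝ)⁻¹) • (x1 + (2:ℝ) • (w - m))) :=
            LCProof.mix_le hf (by norm_num) (by norm_num) (hf.1 z) hε.le le_rfl hfx
        _ = f w := by rw [hcomb]
    have hint2 : ENNReal.ofReal ((f z * ε) ^ (2:ℝ)⁻¹) * v ≤ 1 := by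
      have hstep : ENNReal.ofReal ((f z * ε) ^ (2:ℝ)⁻¹) * volume (ball m (r/2))
          ≤ ∫⁻ x in ball m (r/2), ENNReal.ofReal (f x) ∂(volume : Measure (Euc n)) := by
        rw [← setLIntegral_const]
        exact setLIntegral_mono' measurableSet_ball
          (fun w hw => ENNReal.ofReal_le_ofReal (hfw w hw))
      have hballeq : volume (ball m (r/2)) = v := by
        rw [hvdef, Measure.addHaar_ball_center]
      rw [hballeq] at hstep
      exact hstep.trans ((setLIntegral_le_lintegral _ _).trans htot.le)
    have hle : (f z * ε) ^ (2:ℝ)⁻¹ ≤ B := by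
      have h1 : ENNReal.ofReal ((f z * ε) ^ (2:ℝ)⁻¹) ≤ v⁻¹ :=
        ENNReal.le_inv_iff_mul_le.2 hint2
      have h2 := (ENNReal.ofReal_le_iff_le_toReal (by simpa using hv0)).1 h1
      exact h2
    have hsq : ((f z * ε) ^ (2:ℝ)⁻¹) ^ (2:ℕ) = f z * ε := by
      rw [← Real.rpow_natCast ((f z * ε) ^ (2:ℝ)⁻¹) 2, ← Real.rpow_mul (mul_nonneg (hf.1 z) hε.le)]
      norm_num
    calc f z * ε = ((f z * ε) ^ (2:ℝ)⁻¹) ^ (2:ℕ) := hsq.symm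
      _ ≤ B ^ (2:ℕ) := pow_le_pow_left₀ (Real.rpow_nonneg (mul_nonneg (hf.1 z) hε.le) _) hle 2
  -- essSup facts
  set S : Set ℝ := {a : ℝ | volume {x : Euc n | a < f x} = 0} with hSdef
  have hMS : essSup f (volume : Measure (Euc n)) = sInf S := essSup_eq_sInf _ _
  have hCS : B ^ (2:ℕ) / ε ∈ S := by
    have hemp : {x : Euc n | B ^ (2:ℕ) / ε < f x} = (∅ : Set (Euc n)) := by
      ext z
      simp only [mem_setOf_eq, mem_empty_iff_false, iff_false, not_lt]
      exact (le_div_iff₀ hε).2 (hCbound z)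
    simp only [hSdef, mem_setOf_eq, hemp, measure_empty]
  have hSlb : ∀ a ∈ S, ε ≤ a := by
    intro a ha
    by_contra hlt
    push_neg at hlt
    exact hWε (measure_mono_null (fun x hx => lt_trans hlt hx) ha)
  set M : ℝ := essSup f (volume : Measure (Euc n)) with hMdef
  have hMε : ε ≤ M := by
    rw [hMS]
    exact le_csInf ⟨_, hCS⟩ hSlb
  have hM0 : 0 < M := lt_of_lt_of_le hε hMε
  -- near-maximum point
  set δ : ℝ := min 1 (3*t/4) with hδdef
  have hδ0 : 0 < δ := lt_min one_pos (by linarith)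
  have hδ1 : δ ≤ 1 := min_le_left _ _
  have hδt : δ ≤ 3*t/4 := min_le_right _ _
  set m0 : ℝ := M * Real.exp (-δ) with hm0def
  have hm00 : 0 < m0 := mul_pos hM0 (Real.exp_pos _)
  have hm0M : m0 < M := by
    have hlt1 : Real.exp (-δ) < 1 := Real.exp_lt_one_iff.2 (by linarith)
    calc m0 = M * Real.exp (-δ) := hm0def
      _ < M * 1 := by exact (mul_lt_mul_iff_right₀ hM0).2 hlt1
      _ = M := mul_one M
  have hx0ex : ∃ x0 : Euc n, m0 < f x0 := by
    have hnotS : m0 ∉ S := by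
      intro hmem
      have hle : M ≤ m0 := by
        rw [hMS]
        exact csInf_le ⟨ε, hSlb⟩ hmem
      linarith
    have hne : volume {x : Euc n | m0 < f x} ≠ 0 := hnotS
    obtain ⟨x0, hx0⟩ := nonempty_of_measure_ne_zero hne
    exact ⟨x0, hx0⟩
  obtain ⟨x0, hx0⟩ := hx0ex
  -- scaling of superlevel sets
  set p : ℝ := (5:ℝ)⁻¹ with hpdef
  have hp : 0 < p := by norm_num
  have hp1 : p < 1 := by norm_num
  have hscale : ∀ s : ℝ, 0 < s →
      ENNReal.ofReal (p^n) * W s ≤ W (s^p * m0^(1-p)) := by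
    intro s hs
    have himg : AffineMap.homothety x0 p '' {x : Euc n | s < f x}
        ⊆ {x : Euc n | s^p * m0^(1-p) < f x} := by
      rintro _ ⟨x, hx, rfl⟩
      have heq : AffineMap.homothety x0 p x = p • x + (1-p) • x0 := by
        simp only [AffineMap.homothety_apply, vsub_eq_sub, vadd_eq_add, smul_sub, sub_smul,
          one_smul]
        abel
      show s^p * m0^(1-p) < f (AffineMap.homothety x0 p x)
      rw [heq]
      exact LCProof.mix_lt hf hp hp1 hs.le hm00.le hx hx0
    have hmono := measure_mono (μ := (volume : Measure (Euc n))) himg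
    rw [Measure.addHaar_image_homothety] at hmono
    rw [show (Module.finrank ℝ (Euc n)) = n from finrank_euclideanSpace_fin] at hmono
    rwa [abs_of_pos (pow_pos hp n)] at hmono
  -- layer cake for f^p
  have hpow : ∫⁻ x, ENNReal.ofReal (f x ^ p) ∂(volume : Measure (Euc n))
      = ∫⁻ s in Ioi (0:ℝ), W s * ENNReal.ofReal (p * s^(p-1)) := by
    have hgint : ∀ u : ℝ, u > 0 →
        IntervalIntegrable (fun u : ℝ => p * u^(p-1)) volume 0 u := by
      intro u hu
      exact (intervalIntegral.intervalIntegrable_rpow' (by norm_num)).const_mul p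
    have hgnn : ∀ᵐ u ∂(volume.restrict (Ioi (0:ℝ))), 0 ≤ p * u^(p-1) := by
      refine (ae_restrict_iff' measurableSet_Ioi).2 (ae_of_all _ (fun u hu => ?_))
      have : (0:ℝ) < u := hu
      positivity
    have hg : ∀ x : Euc n, ∫ u in (0:ℝ)..(f x), (p * u^(p-1)) = f x ^ p := by
      intro x
      rw [intervalIntegral.integral_const_mul,
        integral_rpow (Or.inl (by norm_num : (-1:ℝ) < p - 1))]
      rw [Real.zero_rpow (by norm_num : p - 1 + 1 ≠ 0)]
      rw [show p - 1 + 1 = p by ring]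
      field_simp
      ring
    calc ∫⁻ x, ENNReal.ofReal (f x ^ p) ∂(volume : Measure (Euc n))
        = ∫⁻ x, ENNReal.ofReal (∫ u in (0:ℝ)..(f x), (p * u^(p-1)))
            ∂(volume : Measure (Euc n)) := lintegral_congr (fun x => by rw [hg])
      _ = ∫⁻ s in Ioi (0:ℝ), volume {a : Euc n | s < f a} * ENNReal.ofReal (p * s^(p-1)) :=
          lintegral_comp_eq_lintegral_meas_lt_mul volume hnn hfm hgint hgnn
  -- change of variables
  set φ : ℝ → ℝ := fun s => s^p * m0^(1-p) with hφdef
  set d : ℝ → ℝ := fun s => (p * s^(p-1)) * m0^(1-p) with hddef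
  have hm0p : (0:ℝ) < m0^(1-p) := Real.rpow_pos_of_pos hm00 _
  have hφim : φ '' Ioi 0 = Ioi (0:ℝ) := by
    apply Subset.antisymm
    · rintro _ ⟨s, hs, rfl⟩
      exact mul_pos (Real.rpow_pos_of_pos hs p) hm0p
    · intro σ hσ
      have hσ' : (0:ℝ) < σ / m0^(1-p) := div_pos hσ hm0p
      refine ⟨(σ / m0^(1-p)) ^ p⁻¹, Real.rpow_pos_of_pos hσ' _, ?_⟩
      show ((σ / m0^(1-p)) ^ p⁻¹) ^ p * m0^(1-p) = σ
      rw [Real.rpow_inv_rpow hσ'.le (ne_of_gt hp)]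
      field_simp
  have hφd : ∀ s ∈ Ioi (0:ℝ), HasDerivWithinAt φ (d s) (Ioi 0) s := by
    intro s hs
    exact ((Real.hasDerivAt_rpow_const (p := p)
      (Or.inl (ne_of_gt (show (0:ℝ) < s from hs)))).mul_const _).hasDerivWithinAt
  have hφinj : InjOn φ (Ioi (0:ℝ)) := by
    have hsm : StrictMonoOn φ (Ioi (0:ℝ)) := by
      intro a ha b hb hab
      exact mul_lt_mul_of_pos_right
        (Real.rpow_lt_rpow (le_of_lt (show (0:ℝ) < a from ha)) hab hp) hm0p
    exact hsm.injOn
  have hcv : ∫⁻ s in Ioi (0:ℝ), ENNReal.ofReal |d s| * W (φ s) = 1 := by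
    rw [← LCProof.lintegral_image_eq_lintegral_abs_deriv_mul measurableSet_Ioi hφd hφinj W, hφim]
    exact layer
  -- main integral bound
  have hmain : ∫⁻ x, ENNReal.ofReal (f x ^ p) ∂(volume : Measure (Euc n))
      ≤ ENNReal.ofReal ((p^n)⁻¹ * (m0^(1-p))⁻¹) := by
    rw [hpow]
    set oP : ℝ≥0∞ := ENNReal.ofReal (p^n) with hoP
    set a : ℝ≥0∞ := ENNReal.ofReal (m0^(1-p)) with hoa
    have hoP0 : oP ≠ 0 := by
      simp only [hoP, ne_eq, ENNReal.ofReal_eq_zero, not_le]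
      positivity
    have hoPt : oP ≠ ⊤ := ENNReal.ofReal_ne_top
    have hoa0 : a ≠ 0 := by
      simp only [hoa, ne_eq, ENNReal.ofReal_eq_zero, not_le]
      exact hm0p
    have hoat : a ≠ ⊤ := ENNReal.ofReal_ne_top
    have key : ∀ᵐ s ∂(volume.restrict (Ioi (0:ℝ))),
        W s * ENNReal.ofReal (p * s^(p-1))
          ≤ (oP⁻¹ * a⁻¹) * (ENNReal.ofReal |d s| * W (φ s)) := by
      refine (ae_restrict_iff' measurableSet_Ioi).2 (ae_of_all _ (fun s hs => ?_))
      have hs0 : (0:ℝ) < s := hs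
      have h1 : W s ≤ oP⁻¹ * W (φ s) := by
        have h2 := hscale s hs0
        calc W s = oP⁻¹ * (oP * W s) := by
              rw [← mul_assoc, ENNReal.inv_mul_cancel hoP0 hoPt, one_mul]
          _ ≤ oP⁻¹ * W (φ s) := mul_le_mul_right h2 _
      have habs : |d s| = (p * s^(p-1)) * m0^(1-p) := by
        apply abs_of_pos
        have : (0:ℝ) < s^(p-1) := Real.rpow_pos_of_pos hs0 _
        positivity
      have hofmul : ENNReal.ofReal ((p * s^(p-1)) * m0^(1-p))
          = ENNReal.ofReal (p * s^(p-1)) * a := by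
        rw [hoa, ← ENNReal.ofReal_mul]
        positivity
      rw [habs, hofmul]
      calc W s * ENNReal.ofReal (p * s^(p-1))
          ≤ (oP⁻¹ * W (φ s)) * ENNReal.ofReal (p * s^(p-1)) :=
            mul_le_mul_left h1 _
        _ = (a⁻¹ * a) * ((oP⁻¹ * W (φ s)) * ENNReal.ofReal (p * s^(p-1))) := by
            rw [ENNReal.inv_mul_cancel hoa0 hoat, one_mul]
        _ = (oP⁻¹ * a⁻¹) * (ENNReal.ofReal (p * s^(p-1)) * a * W (φ s)) := by ring
    calc ∫⁻ s in Ioi (0:ℝ), W s * ENNReal.ofReal (p * s^(p-1))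
        ≤ ∫⁻ s in Ioi (0:ℝ), (oP⁻¹ * a⁻¹) * (ENNReal.ofReal |d s| * W (φ s)) :=
          lintegral_mono_ae key
      _ = (oP⁻¹ * a⁻¹) * ∫⁻ s in Ioi (0:ℝ), ENNReal.ofReal |d s| * W (φ s) :=
          lintegral_const_mul' _ _
            (ENNReal.mul_ne_top (ENNReal.inv_ne_top.2 hoP0) (ENNReal.inv_ne_top.2 hoa0))
      _ = oP⁻¹ * a⁻¹ := by rw [hcv, mul_one]
      _ = ENNReal.ofReal ((p^n)⁻¹ * (m0^(1-p))⁻¹) := by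
          rw [ENNReal.ofReal_mul (by positivity), hoP, hoa,
            ← ENNReal.ofReal_inv_of_pos (by positivity),
            ← ENNReal.ofReal_inv_of_pos hm0p]
  -- Markov / Chebyshev step
  set c : ℝ := Real.exp (-t) * M with hcdef
  have hc0 : 0 < c := mul_pos (Real.exp_pos _) hM0
  have hAnm : NullMeasurableSet {x : Euc n | c ≤ f x} (volume : Measure (Euc n)) :=
    (LCProof.convex_le hf hc0).nullMeasurableSet _
  have hmark : μ ({x : Euc n | c ≤ f x}ᶜ)
      ≤ ENNReal.ofReal (c^(1-p)) * ∫⁻ x, ENNReal.ofReal (f x ^ p) ∂(volume : Measure (Euc n)) := by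
    rw [hμ, withDensity_apply' _ _]
    have hptw : ∀ᵐ x ∂((volume : Measure (Euc n)).restrict ({x : Euc n | c ≤ f x}ᶜ)),
        ENNReal.ofReal (f x) ≤ ENNReal.ofReal (c^(1-p)) * ENNReal.ofReal (f x ^ p) := by
      refine (ae_restrict_iff'₀ hAnm.compl).2 (ae_of_all _ (fun x hx => ?_))
      have hfxc : f x < c := not_le.1 hx
      rw [← ENNReal.ofReal_mul (Real.rpow_nonneg hc0.le _)]
      apply ENNReal.ofReal_le_ofReal
      rcases eq_or_lt_of_le (hf.1 x) with h0 | h0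
      · rw [← h0]
        positivity
      · calc f x = f x ^ (1-p) * f x ^ p := by
              rw [← Real.rpow_add h0]
              norm_num
          _ ≤ c^(1-p) * f x ^ p :=
            mul_le_mul_of_nonneg_right
              (Real.rpow_le_rpow (hf.1 x) hfxc.le (by norm_num))
              (Real.rpow_nonneg (hf.1 x) _)
    calc ∫⁻ x in {x : Euc n | c ≤ f x}ᶜ, ENNReal.ofReal (f x) ∂(volume : Measure (Euc n))
        ≤ ∫⁻ x in {x : Euc n | c ≤ f x}ᶜ,
            ENNReal.ofReal (c^(1-p)) * ENNReal.ofReal (f x ^ p) ∂(volume : Measure (Euc n)) :=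
          lintegral_mono_ae hptw
      _ = ENNReal.ofReal (c^(1-p))
            * ∫⁻ x in {x : Euc n | c ≤ f x}ᶜ, ENNReal.ofReal (f x ^ p)
              ∂(volume : Measure (Euc n)) :=
          lintegral_const_mul' _ _ ENNReal.ofReal_ne_top
      _ ≤ ENNReal.ofReal (c^(1-p))
            * ∫⁻ x, ENNReal.ofReal (f x ^ p) ∂(volume : Measure (Euc n)) :=
          mul_le_mul_right (setLIntegral_le_lintegral _ _) _
  -- numeric estimate
  have hXpos : (0:ℝ) < M^(1-p) := Real.rpow_pos_of_pos hM0 _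
  have hlog5 : Real.log 5 < 2 := by
    rw [Real.log_lt_iff_lt_exp (by norm_num)]
    have h2 : Real.exp 2 = Real.exp 1 * Real.exp 1 := by
      rw [← Real.exp_add]; norm_num
    nlinarith [Real.exp_one_gt_d9]
  have hnum : c^(1-p) * ((p^n)⁻¹ * (m0^(1-p))⁻¹) ≤ Real.exp (-t/5) := by
    have e1 : c^(1-p) = Real.exp (-t*(1-p)) * M^(1-p) := by
      rw [hcdef, Real.mul_rpow (Real.exp_pos _).le hM0.le, ← Real.exp_mul]
    have e2 : (m0^(1-p))⁻¹ = (M^(1-p))⁻¹ * Real.exp (δ*(1-p)) := by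
      rw [hm0def, Real.mul_rpow hM0.le (Real.exp_pos _).le, ← Real.exp_mul, mul_inv,
        ← Real.exp_neg]
      ring_nf
    have e3 : ((p:ℝ)^n)⁻¹ = Real.exp ((n:ℝ) * Real.log 5) := by
      rw [hpdef, inv_pow, inv_inv, Real.exp_nat_mul, Real.exp_log (by norm_num : (0:ℝ) < 5)]
    rw [e1, e2, e3]
    have heq : Real.exp (-t*(1-p)) * M^(1-p)
        * (Real.exp ((n:ℝ) * Real.log 5) * ((M^(1-p))⁻¹ * Real.exp (δ*(1-p))))
        = Real.exp (-t*(1-p) + (n:ℝ) * Real.log 5 + δ*(1-p)) := by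
      rw [Real.exp_add, Real.exp_add]
      field_simp
    rw [heq]
    apply Real.exp_le_exp.2
    rw [hpdef]
    rcases Nat.eq_zero_or_pos n with hn | hn
    · subst hn
      simp only [Nat.cast_zero, zero_mul]
      linarith
    · have hn1 : (1:ℝ) ≤ (n:ℝ) := by exact_mod_cast hn
      have hnlog : (n:ℝ) * Real.log 5 ≤ (n:ℝ) * 2 :=
        mul_le_mul_of_nonneg_left hlog5.le (by linarith)
      linarith
  -- conclusion
  have hAc : μ ({x : Euc n | c ≤ f x}ᶜ) ≤ ENNReal.ofReal (Real.exp (-t/5)) := by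
    refine le_trans hmark (le_trans (mul_le_mul_right hmain _) ?_)
    rw [← ENNReal.ofReal_mul (Real.rpow_nonneg hc0.le _)]
    exact ENNReal.ofReal_le_ofReal hnum
  have hAnmμ : NullMeasurableSet {x : Euc n | c ≤ f x} μ := by
    refine hAnm.mono_ac ?_
    rw [hμ]
    exact withDensity_absolutelyContinuous _ _
  have hsum : μ {x : Euc n | c ≤ f x} + μ ({x : Euc n | c ≤ f x}ᶜ) = 1 :=
    by rw [measure_add_measure_compl₀ hAnmμ, measure_univ]
  have h1 : (μ {x : Euc n | c ≤ f x}).toReal + (μ ({x : Euc n | c ≤ f x}ᶜ)).toReal = 1 := by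
    rw [← ENNReal.toReal_add (measure_ne_top μ _) (measure_ne_top μ _), hsum, ENNReal.toReal_one]
  have h2 : (μ ({x : Euc n | c ≤ f x}ᶜ)).toReal ≤ Real.exp (-t/5) :=
    ENNReal.toReal_le_of_le_ofReal (Real.exp_pos _).le hAc
  have hsup : superLevelSet f t = {x : Euc n | c ≤ f x} := rfl
  rw [hsup]
  linarith
end
end
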